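/- arXiv:2008.05328 — 5 statements merged into one kernel-verified Lean document; each statement's English description precedes it below -/
import Mathlib

section
/- Let X, Y ∈ P_{2n} be symmetric positive definite 2n×2n matrices such that X^{-1}J and Y^{-1}J are similar matrices. Then there exists S ∈ Sp~(2n;ℝ) with Y = SᵀXS. -/
open Matrix

/-- The standard symplectic matrix `J = [[0, Id],[-Id, 0]]`. -/
def sympJ (n : ℕ) : Matrix (Fin n ⊕ Fin n) (Fin n ⊕ Fin n) ℝ :=
  Matrix.fromBlocks 0 1 (-1) 0

/-- `Sp~(2n;ℝ)`: invertible matrices with `AᵀJA = ±J`. -/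
def SpTilde (n : ℕ) : Set (Matrix (Fin n ⊕ Fin n) (Fin n ⊕ Fin n) ℝ) :=
  {A | IsUnit A.det ∧ (Aᵀ * sympJ n * A = sympJ n ∨ Aᵀ * sympJ n * A = -sympJ n)}

section Helpers

variable {m : Type*} [Fintype m] [DecidableEq m]

open scoped MatrixOrder in
noncomputable def Matrix.PosSemidef.sqrt {M : Matrix m m ℝ} (_ : M.PosSemidef) : Matrix m m ℝ :=
  CFC.sqrt M

open scoped MatrixOrder in
lemma Matrix.PosSemidef.sqrt_mul_self {M : Matrix m m ℝ} (hM : M.PosSemidef) :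
    hM.sqrt * hM.sqrt = M :=
  CFC.sqrt_mul_sqrt_self M hM.nonneg

open scoped MatrixOrder in
lemma Matrix.PosSemidef.posSemidef_sqrt {M : Matrix m m ℝ} (hM : M.PosSemidef) :
    hM.sqrt.PosSemidef :=
  (CFC.sqrt_nonneg M).posSemidef

omit [DecidableEq m] in
private lemma trace_transpose_mul_self_nonneg' (A : Matrix m m ℝ) :
    0 ≤ (Aᵀ * A).trace := by
  rw [Matrix.trace]
  refine Finset.sum_nonneg fun i _ => ?_
  rw [Matrix.diag_apply, Matrix.mul_apply]
  exact Finset.sum_nonneg fun j _ => by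
    simpa [Matrix.transpose_apply] using mul_self_nonneg (A j i)

private lemma posDef_of_posSemidef_isUnit' {M : Matrix m m ℝ} (h1 : M.PosSemidef)
    (h2 : IsUnit M.det) : M.PosDef := by
  refine Matrix.PosDef.of_dotProduct_mulVec_pos h1.1 fun x hx => ?_
  rcases (h1.dotProduct_mulVec_nonneg x).lt_or_eq with h | h
  · exact h
  · exfalso
    have h0 : M *ᵥ x = 0 := (h1.dotProduct_mulVec_zero_iff x).mp h.symm
    have hinj : Function.Injective M.mulVec :=
      Matrix.mulVec_injective_iff_isUnit.mpr ((Matrix.isUnit_iff_isUnit_det M).mpr h2)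
    exact hx (hinj (by simpa using h0))

private lemma eq_zero_of_posDef_anticomm' {H K : Matrix m m ℝ} (hH : H.PosDef)
    (h : H * K + K * H = 0) : K = 0 := by
  classical
  have hGsym : (hH.posSemidef.sqrt)ᵀ = hH.posSemidef.sqrt := by
    rw [← Matrix.conjTranspose_eq_transpose_of_trivial]
    exact hH.posSemidef.posSemidef_sqrt.isHermitian
  set G := hH.posSemidef.sqrt with hGdef
  have hGG : G * G = H := hH.posSemidef.sqrt_mul_self
  -- sum of the two traces is zero
  have ht0 : (Kᵀ * (H * K)).trace + (Kᵀ * (K * H)).trace = 0 := by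
    rw [← Matrix.trace_add, ← Matrix.mul_add, h, Matrix.mul_zero, Matrix.trace_zero]
  -- second trace is nonneg
  have ht2 : 0 ≤ (Kᵀ * (K * H)).trace := by
    have e1 : Kᵀ * (K * H) = (Kᵀ * K * G) * G := by
      rw [← hGG]; simp only [Matrix.mul_assoc]
    have e2 : G * (Kᵀ * K * G) = (K * G)ᵀ * (K * G) := by
      rw [Matrix.transpose_mul, hGsym]; simp only [Matrix.mul_assoc]
    rw [e1, Matrix.trace_mul_comm, e2]
    exact trace_transpose_mul_self_nonneg' _
  -- diagonal entries of first matrix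
  have hdiag : ∀ i, (Kᵀ * (H * K)).diag i
      = (fun a => K a i) ⬝ᵥ H *ᵥ (fun a => K a i) := by
    intro i
    simp [Matrix.diag_apply, Matrix.mul_apply, dotProduct, Matrix.mulVec,
      Matrix.transpose_apply, Finset.mul_sum]
  have hterm : ∀ i, 0 ≤ (Kᵀ * (H * K)).diag i := fun i => by
    rw [hdiag i]
    simpa using hH.posSemidef.dotProduct_mulVec_nonneg (fun a => K a i)
  have htr1 : (Kᵀ * (H * K)).trace = 0 := by
    have hge : 0 ≤ (Kᵀ * (H * K)).trace := by
      rw [Matrix.trace]; exact Finset.sum_nonneg fun i _ => hterm i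
    linarith
  have hdiag0 : ∀ i, (Kᵀ * (H * K)).diag i = 0 := by
    intro i
    have := (Finset.sum_eq_zero_iff_of_nonneg (fun j _ => hterm j)).mp
      (by rw [← Matrix.trace]; exact htr1)
    exact this i (Finset.mem_univ i)
  have hcol : ∀ i, (fun a => K a i) = 0 := by
    intro i
    by_contra hne
    have hpos := hH.dotProduct_mulVec_pos hne
    rw [star_trivial] at hpos
    have : (fun a => K a i) ⬝ᵥ H *ᵥ (fun a => K a i) = 0 := by
      rw [← hdiag i]; exact hdiag0 i
    exact absurd this hpos.ne'
  ext a b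
  exact congrFun (hcol b) a

private lemma exists_commuting_sqrt' {M B : Matrix m m ℝ} (hM : M.PosDef)
    (h : B * M = M * B) :
    ∃ H : Matrix m m ℝ, Hᵀ = H ∧ H * H = M ∧ IsUnit H.det ∧ B * H = H * B := by
  classical
  have hHsym : (hM.posSemidef.sqrt)ᵀ = hM.posSemidef.sqrt := by
    rw [← Matrix.conjTranspose_eq_transpose_of_trivial]
    exact hM.posSemidef.posSemidef_sqrt.isHermitian
  set H := hM.posSemidef.sqrt with hHdef
  have hHH : H * H = M := hM.posSemidef.sqrt_mul_self
  have hHdet : IsUnit H.det := by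
    rw [isUnit_iff_ne_zero]
    intro h0
    have : M.det = 0 := by rw [← hHH, Matrix.det_mul, h0, mul_zero]
    exact hM.det_pos.ne' this
  have hHpd : H.PosDef := posDef_of_posSemidef_isUnit' hM.posSemidef.posSemidef_sqrt hHdet
  have key : H * (H * B - B * H) + (H * B - B * H) * H = 0 := by
    have e : H * (H * B - B * H) + (H * B - B * H) * H = M * B - B * M := by
      rw [← hHH]; noncomm_ring
    rw [e, ← h, sub_self]
  have hK0 : H * B - B * H = 0 := eq_zero_of_posDef_anticomm' hHpd key
  refine ⟨H, hHsym, hHH, hHdet, ?_⟩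
  have := sub_eq_zero.mp hK0
  exact this.symm

end Helpers

theorem similar_implies_symp_orbit (n : ℕ)
    (X Y : Matrix (Fin n ⊕ Fin n) (Fin n ⊕ Fin n) ℝ)
    (hX : X.PosDef) (hY : Y.PosDef)
    (hsim : ∃ P : Matrix (Fin n ⊕ Fin n) (Fin n ⊕ Fin n) ℝ, IsUnit P.det ∧
      X⁻¹ * sympJ n = P * (Y⁻¹ * sympJ n) * P⁻¹) :
    ∃ S ∈ SpTilde n, Y = Sᵀ * X * S := by
  classical
  obtain ⟨P, hPdet, hPsim⟩ := hsim
  obtain ⟨J, hJdef⟩ : ∃ J', J' = sympJ n := ⟨_, rfl⟩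
  rw [← hJdef] at hPsim
  have hJT : Jᵀ = -J := by
    rw [hJdef]
    ext (i | i) (j | j) <;>
      simp [sympJ, Matrix.one_apply, eq_comm]
  -- square roots of X and Y
  have sqrt_exists : ∀ (Z : Matrix (Fin n ⊕ Fin n) (Fin n ⊕ Fin n) ℝ), Z.PosDef →
      ∃ R : Matrix (Fin n ⊕ Fin n) (Fin n ⊕ Fin n) ℝ, Rᵀ = R ∧ R * R = Z ∧ IsUnit R.det := by
    intro Z hZ
    refine ⟨hZ.posSemidef.sqrt, ?_, hZ.posSemidef.sqrt_mul_self, ?_⟩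
    · rw [← Matrix.conjTranspose_eq_transpose_of_trivial]
      exact hZ.posSemidef.posSemidef_sqrt.isHermitian
    · rw [isUnit_iff_ne_zero]
      intro h0
      have : Z.det = 0 := by
        rw [← hZ.posSemidef.sqrt_mul_self, Matrix.det_mul, h0, mul_zero]
      exact hZ.det_pos.ne' this
  obtain ⟨Rx, hRxT, hRxX, hRxdet⟩ := sqrt_exists X hX
  obtain ⟨Ry, hRyT, hRyY, hRydet⟩ := sqrt_exists Y hY
  have hXinv : X⁻¹ = Rx⁻¹ * Rx⁻¹ := by rw [← hRxX, Matrix.mul_inv_rev]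
  have hYinv : Y⁻¹ = Ry⁻¹ * Ry⁻¹ := by rw [← hRyY, Matrix.mul_inv_rev]
  have hRxiT : Rx⁻¹ᵀ = Rx⁻¹ := by rw [Matrix.transpose_nonsing_inv, hRxT]
  have hRyiT : Ry⁻¹ᵀ = Ry⁻¹ := by rw [Matrix.transpose_nonsing_inv, hRyT]
  have hsim' : X⁻¹ * J * P = P * (Y⁻¹ * J) := by
    rw [hPsim, Matrix.nonsing_inv_mul_cancel_right _ _ hPdet]
  obtain ⟨Am, hAm⟩ : ∃ Z, Z = Rx⁻¹ * J * Rx⁻¹ := ⟨_, rfl⟩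
  obtain ⟨Bm, hBm⟩ : ∃ Z, Z = Ry⁻¹ * J * Ry⁻¹ := ⟨_, rfl⟩
  obtain ⟨T, hT⟩ : ∃ Z, Z = Rx * P * Ry⁻¹ := ⟨_, rfl⟩
  -- intertwining
  have hAT : Am * T = T * Bm := by
    have h1 : Am * T = Rx⁻¹ * J * P * Ry⁻¹ := by
      calc Am * T = ((Rx⁻¹ * J) * (Rx⁻¹ * Rx)) * (P * Ry⁻¹) := by
            rw [hAm, hT]; simp only [Matrix.mul_assoc]
        _ = (Rx⁻¹ * J) * (P * Ry⁻¹) := by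
            rw [Matrix.nonsing_inv_mul _ hRxdet, Matrix.mul_one]
        _ = Rx⁻¹ * J * P * Ry⁻¹ := by simp only [Matrix.mul_assoc]
    have h2 : T * Bm = Rx⁻¹ * J * P * Ry⁻¹ := by
      calc T * Bm = Rx * (P * (Y⁻¹ * J)) * Ry⁻¹ := by
            rw [hT, hBm, hYinv]; simp only [Matrix.mul_assoc]
        _ = Rx * (X⁻¹ * J * P) * Ry⁻¹ := by rw [← hsim']
        _ = (Rx * (Rx⁻¹ * (Rx⁻¹ * (J * P)))) * Ry⁻¹ := by
            rw [hXinv]; simp only [Matrix.mul_assoc]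
        _ = (Rx⁻¹ * (J * P)) * Ry⁻¹ := by
            rw [Matrix.mul_nonsing_inv_cancel_left _ _ hRxdet]
        _ = Rx⁻¹ * J * P * Ry⁻¹ := by simp only [Matrix.mul_assoc]
    rw [h1, h2]
  -- skew-symmetry
  have hAskew : Amᵀ = -Am := by
    rw [hAm]
    simp only [Matrix.transpose_mul, hJT, hRxiT]
    simp only [Matrix.neg_mul, Matrix.mul_neg, Matrix.mul_assoc]
  have hBskew : Bmᵀ = -Bm := by
    rw [hBm]
    simp only [Matrix.transpose_mul, hJT, hRyiT]
    simp only [Matrix.neg_mul, Matrix.mul_neg, Matrix.mul_assoc]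
  have hTA : Tᵀ * Am = Bm * Tᵀ := by
    have h3 := congrArg Matrix.transpose hAT
    rw [Matrix.transpose_mul, Matrix.transpose_mul, hAskew, hBskew,
      Matrix.mul_neg, Matrix.neg_mul] at h3
    exact neg_injective h3
  -- T is invertible
  have hTdet : IsUnit T.det := by
    rw [hT, Matrix.det_mul, Matrix.det_mul]
    exact (hRxdet.mul hPdet).mul (Matrix.isUnit_nonsing_inv_det _ hRydet)
  -- TᵀT is positive definite
  have hMdet : IsUnit (Tᵀ * T).det := by
    rw [Matrix.det_mul, Matrix.det_transpose]
    exact hTdet.mul hTdet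
  have hMpsd : (Tᵀ * T).PosSemidef := by
    have := Matrix.posSemidef_conjTranspose_mul_self T
    rwa [Matrix.conjTranspose_eq_transpose_of_trivial] at this
  have hMpd : (Tᵀ * T).PosDef := posDef_of_posSemidef_isUnit' hMpsd hMdet
  -- Bm commutes with TᵀT
  have hBM : Bm * (Tᵀ * T) = (Tᵀ * T) * Bm := by
    calc Bm * (Tᵀ * T) = (Bm * Tᵀ) * T := by rw [Matrix.mul_assoc]
      _ = (Tᵀ * Am) * T := by rw [hTA]
      _ = Tᵀ * (Am * T) := by rw [Matrix.mul_assoc]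
      _ = Tᵀ * (T * Bm) := by rw [hAT]
      _ = (Tᵀ * T) * Bm := by rw [Matrix.mul_assoc]
  obtain ⟨H, hHT, hHH, hHdet, hBH⟩ := exists_commuting_sqrt' hMpd hBM
  have hHiT : H⁻¹ᵀ = H⁻¹ := by rw [Matrix.transpose_nonsing_inv, hHT]
  have hBHi : Bm * H⁻¹ = H⁻¹ * Bm := by
    calc Bm * H⁻¹ = (H⁻¹ * H) * (Bm * H⁻¹) := by
          rw [Matrix.nonsing_inv_mul _ hHdet, Matrix.one_mul]
      _ = H⁻¹ * ((H * Bm) * H⁻¹) := by simp only [Matrix.mul_assoc]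
      _ = H⁻¹ * ((Bm * H) * H⁻¹) := by rw [hBH]
      _ = H⁻¹ * (Bm * (H * H⁻¹)) := by simp only [Matrix.mul_assoc]
      _ = H⁻¹ * Bm := by rw [Matrix.mul_nonsing_inv _ hHdet, Matrix.mul_one]
  obtain ⟨O, hO⟩ : ∃ Z, Z = T * H⁻¹ := ⟨_, rfl⟩
  have hOTO : Oᵀ * O = 1 := by
    calc Oᵀ * O = H⁻¹ * ((Tᵀ * T) * H⁻¹) := by
          rw [hO, Matrix.transpose_mul, hHiT]; simp only [Matrix.mul_assoc]
      _ = H⁻¹ * ((H * H) * H⁻¹) := by rw [hHH]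
      _ = (H⁻¹ * H) * (H * H⁻¹) := by simp only [Matrix.mul_assoc]
      _ = 1 := by
          rw [Matrix.nonsing_inv_mul _ hHdet, Matrix.mul_nonsing_inv _ hHdet,
            Matrix.one_mul]
  have hAO : Am * O = O * Bm := by
    calc Am * O = (Am * T) * H⁻¹ := by rw [hO, Matrix.mul_assoc]
      _ = (T * Bm) * H⁻¹ := by rw [hAT]
      _ = T * (Bm * H⁻¹) := by rw [Matrix.mul_assoc]
      _ = T * (H⁻¹ * Bm) := by rw [hBHi]
      _ = O * Bm := by rw [hO, Matrix.mul_assoc]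
  have hOdet : IsUnit O.det := by
    have h1 : O.det * O.det = 1 := by
      have h2 := congrArg Matrix.det hOTO
      rwa [Matrix.det_mul, Matrix.det_transpose, Matrix.det_one] at h2
    exact isUnit_iff_exists_inv.mpr ⟨_, h1⟩
  -- the symplectic matrix
  refine ⟨Rx⁻¹ * O * Ry, ⟨?_, Or.inl ?_⟩, ?_⟩
  · rw [Matrix.det_mul, Matrix.det_mul]
    exact ((Matrix.isUnit_nonsing_inv_det _ hRxdet).mul hOdet).mul hRydet
  · show (Rx⁻¹ * O * Ry)ᵀ * sympJ n * (Rx⁻¹ * O * Ry) = sympJ n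
    rw [← hJdef]
    calc (Rx⁻¹ * O * Ry)ᵀ * J * (Rx⁻¹ * O * Ry)
        = Ry * (Oᵀ * (Rx⁻¹ * (J * (Rx⁻¹ * (O * Ry))))) := by
          rw [Matrix.transpose_mul, Matrix.transpose_mul, hRxiT, hRyT]
          simp only [Matrix.mul_assoc]
      _ = Ry * (Oᵀ * ((Am * O) * Ry)) := by
          rw [hAm]; simp only [Matrix.mul_assoc]
      _ = Ry * (Oᵀ * ((O * Bm) * Ry)) := by rw [hAO]
      _ = Ry * ((Oᵀ * O) * (Bm * Ry)) := by simp only [Matrix.mul_assoc]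
      _ = Ry * (Bm * Ry) := by rw [hOTO, Matrix.one_mul]
      _ = (Ry * Ry⁻¹) * (J * (Ry⁻¹ * Ry)) := by
          rw [hBm]; simp only [Matrix.mul_assoc]
      _ = J := by
          rw [Matrix.mul_nonsing_inv _ hRydet, Matrix.nonsing_inv_mul _ hRydet,
            Matrix.one_mul, Matrix.mul_one]
  · refine Eq.symm ?_
    calc (Rx⁻¹ * O * Ry)ᵀ * X * (Rx⁻¹ * O * Ry)
        = Ry * (Oᵀ * (Rx⁻¹ * ((Rx * Rx) * (Rx⁻¹ * (O * Ry))))) := by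
          rw [Matrix.transpose_mul, Matrix.transpose_mul, hRxiT, hRyT, ← hRxX]
          simp only [Matrix.mul_assoc]
      _ = Ry * (Oᵀ * (((Rx⁻¹ * Rx) * (Rx * Rx⁻¹)) * (O * Ry))) := by
          simp only [Matrix.mul_assoc]
      _ = Ry * (Oᵀ * (O * Ry)) := by
          rw [Matrix.nonsing_inv_mul _ hRxdet, Matrix.mul_nonsing_inv _ hRxdet,
            Matrix.one_mul, Matrix.one_mul]
      _ = Ry * ((Oᵀ * O) * Ry) := by simp only [Matrix.mul_assoc]
      _ = Ry * Ry := by rw [hOTO, Matrix.one_mul]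
      _ = Y := hRyY
end

section
/- For all symmetric positive definite 2n×2n matrices Y and all G ∈ GL(2n;ℝ), d_n(GᵀG)·λ_{2n}(Y)^{-1} ≤ d_n(GᵀYG), where d_n(M) denotes the largest absolute value of an eigenvalue of M^{-1}J for M ∈ P_{2n}, and λ_{2n}(Y) is the largest eigenvalue of Y. -/
open Matrix

/-- `d_n(M)`: the largest absolute value of an eigenvalue of `M⁻¹ * J`. -/
noncomputable def dMax (n : ℕ) (M : Matrix (Fin n ⊕ Fin n) (Fin n ⊕ Fin n) ℝ) : ℝ :=
  sSup ((fun z : ℂ => ‖z‖) '' spectrum ℂ ((M⁻¹ * sympJ n).map Complex.ofReal))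

/-- The largest eigenvalue of a symmetric positive definite matrix. -/
noncomputable def lamMax (n : ℕ) (Y : Matrix (Fin n ⊕ Fin n) (Fin n ⊕ Fin n) ℝ) : ℝ :=
  sSup (spectrum ℝ Y)

section Aux

open scoped Matrix.Norms.L2Operator

variable {m : Type*} [Fintype m] [DecidableEq m]

noncomputable instance matrixCStarAlgebra : CStarAlgebra (Matrix m m ℂ) where

/-- Mapping a product of real matrices to ℂ entrywise. -/
lemma map_mul_ofReal (A B : Matrix m m ℝ) :
    (A * B).map Complex.ofReal = A.map Complex.ofReal * B.map Complex.ofReal := by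
  ext i j
  simp only [Matrix.map_apply, Matrix.mul_apply]
  push_cast
  ring

lemma map_det_ofReal (A : Matrix m m ℝ) :
    (A.map Complex.ofReal).det = (A.det : ℂ) := by
  have h := RingHom.map_det Complex.ofRealHom A
  rw [RingHom.mapMatrix_apply] at h
  exact h.symm

lemma isUnit_map_ofReal {A : Matrix m m ℝ} (hA : IsUnit A.det) :
    IsUnit (A.map Complex.ofReal) := by
  rw [Matrix.isUnit_iff_isUnit_det, map_det_ofReal]
  exact isUnit_iff_ne_zero.mpr (Complex.ofReal_ne_zero.mpr hA.ne_zero)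

/-- Conjugation preserves the spectrum. -/
lemma spec_eq_of_conj (a b u : Matrix m m ℂ) (hu : IsUnit u) (h : u * a = b * u) :
    spectrum ℂ a = spectrum ℂ b := by
  obtain ⟨U, rfl⟩ := hu
  have hb : b = (U : Matrix m m ℂ) * a * ((U⁻¹ : (Matrix m m ℂ)ˣ) : Matrix m m ℂ) := by
    conv_lhs => rw [← Units.mul_inv_cancel_right b U, ← h]
  rw [hb, spectrum.units_conjugate]

lemma isSelfAdjoint_map_of_symm (A : Matrix m m ℝ) (h : Aᵀ = A) :
    IsSelfAdjoint (A.map Complex.ofReal) := by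
  show star _ = _
  ext i j
  have hji : A j i = A i j := by
    have := congrFun (congrFun h i) j
    simpa [Matrix.transpose_apply] using this
  simp [Matrix.star_apply, Matrix.map_apply, Complex.conj_ofReal, hji]

lemma isStarNormal_map_of_skew (A : Matrix m m ℝ) (h : Aᵀ = -A) :
    IsStarNormal (A.map Complex.ofReal) := by
  have hstar : star (A.map Complex.ofReal) = -(A.map Complex.ofReal) := by
    ext i j
    have hji : A j i = -A i j := by
      have := congrFun (congrFun h i) j
      simpa [Matrix.transpose_apply] using this
    simp [Matrix.star_apply, Matrix.map_apply, Complex.conj_ofReal, hji]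
  exact ⟨by rw [hstar]; exact (Commute.refl _).neg_left⟩

/-- For a star-normal complex matrix, the sup of the absolute values of the spectrum is the
L2 operator norm. -/
lemma sSup_abs_spectrum [Nonempty m] (a : Matrix m m ℂ) (h : IsStarNormal a) :
    sSup ((fun z : ℂ => ‖z‖) '' spectrum ℂ a) = ‖a‖ := by
  haveI := h
  have hne : (spectrum ℂ a).Nonempty := spectrum.nonempty a
  obtain ⟨z, hz, hz'⟩ := spectrum.exists_nnnorm_eq_spectralRadius_of_nonempty hne
  have hub : ∀ w ∈ spectrum ℂ a, ‖w‖ ≤ ‖z‖ := by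
    intro w hw
    have h1 : (‖w‖₊ : ENNReal) ≤ spectralRadius ℂ a :=
      le_iSup₂ (f := fun k (_ : k ∈ spectrum ℂ a) => (‖k‖₊ : ENNReal)) w hw
    rw [← hz'] at h1
    have h2 : ‖w‖₊ ≤ ‖z‖₊ := by exact_mod_cast h1
    exact_mod_cast h2
  have h1 : sSup ((fun z : ℂ => ‖z‖) '' spectrum ℂ a) = ‖z‖ :=
    le_antisymm
      (csSup_le (hne.image _) (by rintro x ⟨w, hw, rfl⟩; exact hub w hw))
      (le_csSup ⟨‖z‖, by rintro x ⟨w, hw, rfl⟩; exact hub w hw⟩ ⟨z, hz, rfl⟩)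
  have h2 : spectralRadius ℂ a = ‖a‖₊ := IsStarNormal.spectralRadius_eq_nnnorm a
  have h3 : (‖z‖₊ : ENNReal) = (‖a‖₊ : ENNReal) := hz'.trans h2
  have h4 : ‖z‖₊ = ‖a‖₊ := by exact_mod_cast h3
  rw [h1, ← coe_nnnorm z, ← coe_nnnorm a, h4]

/-- Elements of the complex spectrum of (the complexification of) a real positive definite matrix
are bounded by the sup of the real spectrum. -/
lemma abs_spectrum_le_lamMax (Y : Matrix m m ℝ) (hY : Y.PosDef) {z : ℂ}
    (hz : z ∈ spectrum ℂ (Y.map Complex.ofReal)) :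
    ‖z‖ ≤ sSup (spectrum ℝ Y) := by
  have hYsym : Yᵀ = Y := by
    have h := hY.1
    ext i j
    have := congrFun (congrFun h i) j
    simpa [Matrix.conjTranspose_apply] using this
  have hsa : IsSelfAdjoint (Y.map Complex.ofReal) := isSelfAdjoint_map_of_symm Y hYsym
  have hre : z = (z.re : ℂ) := hsa.mem_spectrum_eq_re hz
  set r := z.re with hr
  have hnu : ¬IsUnit (algebraMap ℂ (Matrix m m ℂ) z - Y.map Complex.ofReal) :=
    spectrum.mem_iff.mp hz
  have hmap : algebraMap ℂ (Matrix m m ℂ) z - Y.map Complex.ofReal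
      = (algebraMap ℝ (Matrix m m ℝ) r - Y).map Complex.ofReal := by
    rw [hre]
    ext i j
    by_cases hij : i = j <;>
      simp [Matrix.algebraMap_matrix_apply, Matrix.map_apply, Matrix.sub_apply, hij]
  have hdet0 : (algebraMap ℝ (Matrix m m ℝ) r - Y).det = 0 := by
    by_contra hd
    apply hnu
    rw [hmap, Matrix.isUnit_iff_isUnit_det, map_det_ofReal]
    exact isUnit_iff_ne_zero.mpr (Complex.ofReal_ne_zero.mpr hd)
  obtain ⟨v, hv0, hv⟩ := (Matrix.exists_mulVec_eq_zero_iff).mpr hdet0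
  have hYv : Y *ᵥ v = r • v := by
    have h1 : (algebraMap ℝ (Matrix m m ℝ) r - Y) *ᵥ v = r • v - Y *ᵥ v := by
      rw [Matrix.sub_mulVec, Algebra.algebraMap_eq_smul_one, Matrix.smul_mulVec,
        Matrix.one_mulVec]
    rw [h1] at hv
    exact (sub_eq_zero.mp hv).symm
  have hvv : 0 < v ⬝ᵥ v := by
    have hne : v ⬝ᵥ v ≠ 0 := fun h => hv0 (dotProduct_self_eq_zero.mp h)
    have hnn : 0 ≤ v ⬝ᵥ v := Finset.sum_nonneg fun i _ => mul_self_nonneg (v i)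
    exact lt_of_le_of_ne hnn (Ne.symm hne)
  have hrpos : 0 < r := by
    have hp := hY.dotProduct_mulVec_pos hv0
    have hst : star v = v := by funext i; exact star_trivial _
    rw [hst, hYv, dotProduct_smul, smul_eq_mul] at hp
    nlinarith [hvv, hp]
  have hrmem : r ∈ spectrum ℝ Y := by
    rw [spectrum.mem_iff, Matrix.isUnit_iff_isUnit_det, hdet0]
    exact fun h => (by simpa using h.ne_zero)
  calc ‖z‖ = |r| := by rw [hre]; exact Complex.norm_real r
  _ = r := abs_of_pos hrpos
  _ ≤ sSup (spectrum ℝ Y) := le_csSup (Matrix.finite_spectrum Y).bddAbove hrmem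

end Aux

open scoped Matrix.Norms.L2Operator
open scoped MatrixOrder
theorem dMax_key_inequality (n : ℕ)
    (Y G : Matrix (Fin n ⊕ Fin n) (Fin n ⊕ Fin n) ℝ)
    (hY : Y.PosDef) (hG : IsUnit G.det) :
    dMax n (Gᵀ * G) * (lamMax n Y)⁻¹ ≤ dMax n (Gᵀ * Y * G) := by
  classical
  rcases Nat.eq_zero_or_pos n with hn | hn
  · subst hn
    haveI : IsEmpty (Fin 0 ⊕ Fin 0) := inferInstance
    haveI : Subsingleton (Matrix (Fin 0 ⊕ Fin 0) (Fin 0 ⊕ Fin 0) ℂ) :=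
      ⟨fun a b => by ext i j; exact isEmptyElim i⟩
    have hz : ∀ M : Matrix (Fin 0 ⊕ Fin 0) (Fin 0 ⊕ Fin 0) ℝ, dMax 0 M = 0 := by
      intro M
      rw [dMax]
      have hσ : spectrum ℂ ((M⁻¹ * sympJ 0).map Complex.ofReal) = ∅ := by
        ext w
        simp [spectrum.mem_iff, isUnit_of_subsingleton]
      rw [hσ]
      simp [Real.sSup_empty]
    rw [hz, hz]
    simp
  haveI : Nonempty (Fin n ⊕ Fin n) := ⟨Sum.inl ⟨0, hn⟩⟩
  set J : Matrix (Fin n ⊕ Fin n) (Fin n ⊕ Fin n) ℝ := sympJ n with hJ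
  have hJT : Jᵀ = -J := by
    simp [hJ, sympJ, Matrix.fromBlocks_transpose, Matrix.fromBlocks_neg]
  -- invertibility facts
  have hGT : IsUnit (Gᵀ).det := by rwa [Matrix.det_transpose]
  have hYdet : IsUnit Y.det := hY.det_pos.ne'.isUnit
  -- the square root of Y
  set R : Matrix (Fin n ⊕ Fin n) (Fin n ⊕ Fin n) ℝ := CFC.sqrt Y with hRdef
  have hRR : R * R = Y := CFC.sqrt_mul_sqrt_self Y hY.posSemidef.nonneg
  have hRsym : Rᵀ = R := by
    have h := (Matrix.nonneg_iff_posSemidef.mp (CFC.sqrt_nonneg Y)).1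
    ext i j
    have := congrFun (congrFun h i) j
    simpa [Matrix.conjTranspose_apply] using this
  have hRdet : IsUnit R.det := by
    have h1 : R.det * R.det = Y.det := by rw [← Matrix.det_mul, hRR]
    refine isUnit_iff_ne_zero.mpr fun h => hY.det_pos.ne' ?_
    rw [← h1, h, zero_mul]
  set K : Matrix (Fin n ⊕ Fin n) (Fin n ⊕ Fin n) ℝ := (G⁻¹)ᵀ * J * G⁻¹ with hK
  set B : Matrix (Fin n ⊕ Fin n) (Fin n ⊕ Fin n) ℝ := R⁻¹ * K * R⁻¹ with hB
  have hYinv : Y⁻¹ = R⁻¹ * R⁻¹ := by rw [← hRR, Matrix.mul_inv_rev]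
  -- key conjugation identities over ℝ
  have eq1 : G * ((Gᵀ * Y * G)⁻¹ * J) = (Y⁻¹ * K) * G := by
    have hinv : (Gᵀ * Y * G)⁻¹ = G⁻¹ * ((Y⁻¹ * (Gᵀ)⁻¹)) := by
      rw [Matrix.mul_inv_rev, Matrix.mul_inv_rev]
    rw [hinv, hK]
    simp only [Matrix.mul_assoc]
    rw [Matrix.mul_nonsing_inv_cancel_left _ _ hG, Matrix.nonsing_inv_mul _ hG,
      Matrix.mul_one, Matrix.transpose_nonsing_inv]
  have eq2 : R * (Y⁻¹ * K) = B * R := by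
    rw [hYinv, hB]
    simp only [Matrix.mul_assoc]
    rw [Matrix.mul_nonsing_inv_cancel_left _ _ hRdet, Matrix.nonsing_inv_mul _ hRdet,
      Matrix.mul_one]
  have eq3 : G * ((Gᵀ * G)⁻¹ * J) = K * G := by
    have hinv : (Gᵀ * G)⁻¹ = G⁻¹ * (Gᵀ)⁻¹ := Matrix.mul_inv_rev _ _
    rw [hinv, hK]
    simp only [Matrix.mul_assoc]
    rw [Matrix.mul_nonsing_inv_cancel_left _ _ hG, Matrix.nonsing_inv_mul _ hG,
      Matrix.mul_one, Matrix.transpose_nonsing_inv]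
  -- skew-symmetry
  have hRinvsym : (R⁻¹)ᵀ = R⁻¹ := by rw [Matrix.transpose_nonsing_inv, hRsym]
  have skewK : Kᵀ = -K := by
    rw [hK]
    simp only [Matrix.transpose_mul, Matrix.transpose_transpose, hJT]
    simp [Matrix.mul_assoc]
  have skewB : Bᵀ = -B := by
    rw [hB]
    simp only [Matrix.transpose_mul, hRinvsym, skewK]
    simp [Matrix.mul_assoc]
  -- pass to ℂ
  have hGc : IsUnit (G.map Complex.ofReal) := isUnit_map_ofReal hG
  have hRc : IsUnit (R.map Complex.ofReal) := isUnit_map_ofReal hRdet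
  have hspecS : spectrum ℂ (((Gᵀ * Y * G)⁻¹ * J).map Complex.ofReal)
      = spectrum ℂ (B.map Complex.ofReal) := by
    have s1 := spec_eq_of_conj (((Gᵀ * Y * G)⁻¹ * J).map Complex.ofReal)
      ((Y⁻¹ * K).map Complex.ofReal) (G.map Complex.ofReal) hGc
      (by rw [← map_mul_ofReal, ← map_mul_ofReal, eq1])
    have s2 := spec_eq_of_conj ((Y⁻¹ * K).map Complex.ofReal)
      (B.map Complex.ofReal) (R.map Complex.ofReal) hRc
      (by rw [← map_mul_ofReal, ← map_mul_ofReal, eq2])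
    exact s1.trans s2
  have hspecT : spectrum ℂ (((Gᵀ * G)⁻¹ * J).map Complex.ofReal)
      = spectrum ℂ (K.map Complex.ofReal) :=
    spec_eq_of_conj _ _ (G.map Complex.ofReal) hGc
      (by rw [← map_mul_ofReal, ← map_mul_ofReal, eq3])
  -- identify the dMax values with operator norms
  have hdS : dMax n (Gᵀ * Y * G) = ‖B.map Complex.ofReal‖ := by
    rw [dMax, hspecS, sSup_abs_spectrum _ (isStarNormal_map_of_skew _ skewB)]
  have hdT : dMax n (Gᵀ * G) = ‖K.map Complex.ofReal‖ := by
    rw [dMax, hspecT, sSup_abs_spectrum _ (isStarNormal_map_of_skew _ skewK)]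
  -- norm estimate
  have hKRB : K = R * B * R := by
    rw [hB]
    simp only [Matrix.mul_assoc]
    rw [Matrix.nonsing_inv_mul _ hRdet, Matrix.mul_one,
      Matrix.mul_nonsing_inv_cancel_left _ _ hRdet]
  have hRsa : star (R.map Complex.ofReal) = R.map Complex.ofReal :=
    isSelfAdjoint_map_of_symm R hRsym
  have hnormR : ‖R.map Complex.ofReal‖ * ‖R.map Complex.ofReal‖ = ‖Y.map Complex.ofReal‖ := by
    rw [← CStarRing.norm_star_mul_self (x := R.map Complex.ofReal), hRsa,
      ← map_mul_ofReal, hRR]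
  have hnorm : ‖K.map Complex.ofReal‖
      ≤ ‖Y.map Complex.ofReal‖ * ‖B.map Complex.ofReal‖ := by
    have h1 : K.map Complex.ofReal
        = R.map Complex.ofReal * B.map Complex.ofReal * R.map Complex.ofReal := by
      rw [← map_mul_ofReal, ← map_mul_ofReal, ← hKRB]
    calc ‖K.map Complex.ofReal‖
        = ‖R.map Complex.ofReal * B.map Complex.ofReal * R.map Complex.ofReal‖ := by rw [h1]
    _ ≤ ‖R.map Complex.ofReal * B.map Complex.ofReal‖ * ‖R.map Complex.ofReal‖ :=
        norm_mul_le _ _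
    _ ≤ ‖R.map Complex.ofReal‖ * ‖B.map Complex.ofReal‖ * ‖R.map Complex.ofReal‖ :=
        mul_le_mul_of_nonneg_right (norm_mul_le _ _) (norm_nonneg _)
    _ = ‖R.map Complex.ofReal‖ * ‖R.map Complex.ofReal‖ * ‖B.map Complex.ofReal‖ := by ring
    _ = ‖Y.map Complex.ofReal‖ * ‖B.map Complex.ofReal‖ := by rw [hnormR]
  -- norm of Y is at most lamMax
  have hYsym : Yᵀ = Y := by
    have h := hY.1
    ext i j
    have := congrFun (congrFun h i) j
    simpa [Matrix.conjTranspose_apply] using this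
  have hYnorm : ‖Y.map Complex.ofReal‖ ≤ lamMax n Y := by
    rw [lamMax, ← sSup_abs_spectrum _ (isSelfAdjoint_map_of_symm Y hYsym).isStarNormal]
    refine csSup_le ((spectrum.nonempty _).image _) ?_
    rintro x ⟨w, hw, rfl⟩
    exact abs_spectrum_le_lamMax Y hY hw
  -- lamMax is positive
  have hlam : 0 < lamMax n Y := by
    rw [lamMax]
    obtain i : Fin n ⊕ Fin n := Classical.arbitrary _
    have h1 : hY.1.eigenvalues i ∈ spectrum ℝ Y := hY.1.eigenvalues_mem_spectrum_real i
    have h2 : 0 < hY.1.eigenvalues i := hY.eigenvalues_pos i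
    exact lt_of_lt_of_le h2 (le_csSup (Matrix.finite_spectrum Y).bddAbove h1)
  -- conclude
  rw [hdS, hdT, ← div_eq_mul_inv, div_le_iff₀ hlam]
  calc ‖K.map Complex.ofReal‖
      ≤ ‖Y.map Complex.ofReal‖ * ‖B.map Complex.ofReal‖ := hnorm
  _ ≤ lamMax n Y * ‖B.map Complex.ofReal‖ :=
      mul_le_mul_of_nonneg_right hYnorm (norm_nonneg _)
  _ = ‖B.map Complex.ofReal‖ * lamMax n Y := mul_comm _ _
end

section
/- Fix n ∈ ℕ, r ∈ D_n and let U ⊂ G_r be a set of matrices no two of which lie in the same left coset of Π_r (i.e. G ≠ H in U implies H^{-1}G ∉ Sp~(2n;ℝ)). Then for any C > 0, the set {G ∈ U : ‖G^{-ᵀ}JG^{-1}‖ ≤ C} is finite, for any matrix norm ‖·‖. -/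
open Matrix

/-- The diagonal matrix `δ_r = diag(r_1,…,r_n,1,…,1)`. -/
def deltaR (n : ℕ) (r : Fin n → ℕ) : Matrix (Fin n ⊕ Fin n) (Fin n ⊕ Fin n) ℝ :=
  Matrix.fromBlocks (Matrix.diagonal fun i => (r i : ℝ)) 0 0 1

/-- The group `G_r = δ_r GL(2n;ℤ) δ_r⁻¹` as a set of real matrices. -/
def GrSet (n : ℕ) (r : Fin n → ℕ) : Set (Matrix (Fin n ⊕ Fin n) (Fin n ⊕ Fin n) ℝ) :=
  {G | ∃ A : Matrix (Fin n ⊕ Fin n) (Fin n ⊕ Fin n) ℤ, IsUnit A.det ∧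
    G = deltaR n r * A.map (Int.cast) * (deltaR n r)⁻¹}

/-- A type synonym for `ι → ι → ℝ` carrying no ambient topology, so that we can
equip it with the metric coming from an arbitrary norm `N`. -/
def NSpace (ι : Type*) : Type _ := ι → ι → ℝ

/-- Auxiliary finiteness lemma: matrices whose entry `(i,j)` lies in the lattice
`(q i * q j)⁻¹ • ℤ` and with `N`-norm at most `C` form a finite set, for any norm `N`. -/
lemma lattice_ball_finite {ι : Type*} [Fintype ι] [DecidableEq ι]
    (q : ι → ℝ) (hq : ∀ i, q i ≠ 0)
    (N : Matrix ι ι ℝ → ℝ)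
    (hN0 : ∀ A, N A = 0 ↔ A = 0)
    (hNadd : ∀ A B, N (A + B) ≤ N A + N B)
    (hNsmul : ∀ (c : ℝ) A, N (c • A) = |c| * N A)
    (C : ℝ) :
    {M : Matrix ι ι ℝ | (∀ i j, ∃ k : ℤ, q i * q j * M i j = (k : ℝ)) ∧ N M ≤ C}.Finite := by
  classical
  letI : AddCommGroup (NSpace ι) := inferInstanceAs (AddCommGroup (ι → ι → ℝ))
  letI : Module ℝ (NSpace ι) := inferInstanceAs (Module ℝ (ι → ι → ℝ))
  have hNS : ∀ A : NSpace ι, N A = 0 ↔ A = 0 := hN0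
  have hNSadd : ∀ A B : NSpace ι, N (A + B) ≤ N A + N B := hNadd
  have hNSsmul : ∀ (c : ℝ) (A : NSpace ι), N (c • A) = |c| * N A := hNsmul
  letI : NormedAddCommGroup (NSpace ι) :=
    AddGroupNorm.toNormedAddCommGroup
      { toFun := fun M : NSpace ι => N M
        map_zero' := (hNS 0).2 rfl
        add_le' := hNSadd
        neg' := fun a => by simpa using hNSsmul (-1) a
        eq_zero_of_map_eq_zero' := fun a h => (hNS a).1 h }
  have hnorm : ∀ M : NSpace ι, ‖M‖ = N M := fun _ => rfl
  letI : NormedSpace ℝ (NSpace ι) :=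
    { norm_smul_le := fun c x => le_of_eq (hNSsmul c x) }
  letI : FiniteDimensional ℝ (NSpace ι) :=
    inferInstanceAs (FiniteDimensional ℝ (ι → ι → ℝ))
  -- the linear map sending `M` to the family of rescaled entries
  let ψlin : NSpace ι →ₗ[ℝ] (ι × ι → ℝ) :=
    { toFun := fun M p => q p.1 * q p.2 * M p.1 p.2
      map_add' := by
        intro M M'; funext p
        show q p.1 * q p.2 * (M p.1 p.2 + M' p.1 p.2)
          = q p.1 * q p.2 * M p.1 p.2 + q p.1 * q p.2 * M' p.1 p.2
        ring
      map_smul' := by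
        intro c M; funext p
        show q p.1 * q p.2 * (c * M p.1 p.2) = c * (q p.1 * q p.2 * M p.1 p.2)
        ring }
  let ψ : NSpace ι →L[ℝ] (ι × ι → ℝ) := LinearMap.toContinuousLinearMap ψlin
  set B : ℝ := ‖ψ‖ * C with hB
  -- each rescaled entry of a matrix in our set is an integer of absolute value ≤ B
  set F : Set ℝ := Int.cast '' (Set.Icc (⌈-B⌉) (⌊B⌋)) with hF
  have hFfin : F.Finite := (Set.finite_Icc _ _).image _
  have key : {M : NSpace ι |
      (∀ i j, ∃ k : ℤ, q i * q j * M i j = (k : ℝ)) ∧ N M ≤ C}.Finite := by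
    apply Set.Finite.of_finite_image (f := fun M => ψ M)
    · apply Set.Finite.subset (Set.Finite.pi (fun _ : ι × ι => hFfin))
      rintro x ⟨M, hM, rfl⟩
      intro p _
      obtain ⟨k, hk⟩ := hM.1 p.1 p.2
      have hval : ψ M p = (k : ℝ) := hk
      have hle : |ψ M p| ≤ B := by
        have h1 : ‖ψ M p‖ ≤ ‖ψ M‖ := norm_le_pi_norm (ψ M) p
        have h2 : ‖ψ M‖ ≤ ‖ψ‖ * ‖M‖ := ψ.le_opNorm M
        have h3 : ‖ψ‖ * ‖M‖ ≤ ‖ψ‖ * C := by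
          apply mul_le_mul_of_nonneg_left _ (norm_nonneg ψ)
          rw [hnorm]; exact hM.2
        calc |ψ M p| = ‖ψ M p‖ := rfl
          _ ≤ B := le_trans h1 (le_trans h2 h3)
      refine ⟨k, ?_, hval.symm⟩
      rw [hval] at hle
      constructor
      · rw [Int.ceil_le]
        have := (abs_le.mp hle).1
        push_cast
        linarith
      · rw [Int.le_floor]
        have := (abs_le.mp hle).2
        push_cast
        linarith
    · intro M hM M' hM' heq
      funext i j
      have h1 : q i * q j * M i j = q i * q j * M' i j := congrFun heq (i, j)
      exact mul_left_cancel₀ (mul_ne_zero (hq i) (hq j)) h1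
  exact key

theorem finitely_many_coset_reps_with_bounded_norm (n : ℕ)
    (r : Fin n → ℕ) (hr : ∀ i, 0 < r i) (hdvd : ∀ i j : Fin n, i ≤ j → r i ∣ r j)
    (U : Set (Matrix (Fin n ⊕ Fin n) (Fin n ⊕ Fin n) ℝ)) (hU : U ⊆ GrSet n r)
    (hpair : ∀ G ∈ U, ∀ H ∈ U, G ≠ H → H⁻¹ * G ∉ SpTilde n)
    (N : Matrix (Fin n ⊕ Fin n) (Fin n ⊕ Fin n) ℝ → ℝ)
    (hN0 : ∀ A, N A = 0 ↔ A = 0)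
    (hNadd : ∀ A B, N (A + B) ≤ N A + N B)
    (hNsmul : ∀ (c : ℝ) A, N (c • A) = |c| * N A)
    (C : ℝ) (hC : 0 < C) :
    {G ∈ U | N ((G⁻¹)ᵀ * sympJ n * G⁻¹) ≤ C}.Finite := by
  classical
  -- the diagonal entries of δ_r
  set d : Fin n ⊕ Fin n → ℝ := Sum.elim (fun i => (r i : ℝ)) (fun _ => 1) with hd_def
  have hd : ∀ i, d i ≠ 0 := by
    rintro (i | i)
    · simp only [hd_def, Sum.elim_inl]
      exact_mod_cast (hr i).ne'
    · simp [hd_def]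
  have delta_eq : deltaR n r = Matrix.diagonal d := by
    have h1 : deltaR n r = Matrix.fromBlocks (Matrix.diagonal fun i => (r i : ℝ)) 0 0
        (Matrix.diagonal fun _ : Fin n => (1 : ℝ)) := by
      rw [deltaR]
      exact congrArg _ (Matrix.diagonal_one).symm
    rw [h1, Matrix.fromBlocks_diagonal, hd_def]
  have hdet_delta : (deltaR n r).det ≠ 0 := by
    rw [delta_eq, Matrix.det_diagonal]
    exact Finset.prod_ne_zero_iff.mpr fun i _ => hd i
  have hdelta_unit : IsUnit (deltaR n r).det := isUnit_iff_ne_zero.mpr hdet_delta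
  have hdelta_inv : (deltaR n r)⁻¹ = Matrix.diagonal (fun i => (d i)⁻¹) := by
    apply Matrix.inv_eq_right_inv
    have h2 : (fun i => d i * (d i)⁻¹) = (fun _ : Fin n ⊕ Fin n => (1 : ℝ)) :=
      funext fun i => mul_inv_cancel₀ (hd i)
    rw [delta_eq, Matrix.diagonal_mul_diagonal, h2]
    exact Matrix.diagonal_one
  have hdelta_T : (deltaR n r)ᵀ = deltaR n r := by
    rw [delta_eq, Matrix.diagonal_transpose]
  -- casting of integer matrix products
  have hmul : ∀ X Y : Matrix (Fin n ⊕ Fin n) (Fin n ⊕ Fin n) ℤ,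
      ((X * Y).map (Int.cast : ℤ → ℝ)) = X.map Int.cast * Y.map Int.cast := by
    intro X Y
    have := Matrix.map_mul (L := X) (M := Y) (f := Int.castRingHom ℝ)
    simpa using this
  -- every element of GrSet has unit determinant
  have hdetGr : ∀ G ∈ GrSet n r, IsUnit G.det := by
    rintro G ⟨A, hA, rfl⟩
    rw [isUnit_iff_ne_zero]
    rw [Matrix.det_mul, Matrix.det_mul, Matrix.det_nonsing_inv,
      Ring.inverse_eq_inv]
    have hAdet : ((A.map (Int.cast : ℤ → ℝ)).det) ≠ 0 := by
      have : (A.map (Int.cast : ℤ → ℝ)).det = ((A.det : ℤ) : ℝ) := by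
        have := RingHom.map_det (Int.castRingHom ℝ) A
        simpa using this.symm
      rw [this]
      exact_mod_cast (Int.isUnit_iff.mp hA).elim (fun h => by simp [h]) (fun h => by simp [h])
    exact mul_ne_zero (mul_ne_zero hdet_delta hAdet) (inv_ne_zero hdet_delta)
  -- the integer skew matrix δᵀ J δ
  set Jr : Matrix (Fin n ⊕ Fin n) (Fin n ⊕ Fin n) ℤ :=
    Matrix.fromBlocks 0 (Matrix.diagonal fun i => (r i : ℤ))
      (-(Matrix.diagonal fun i => (r i : ℤ))) 0 with hJr_def
  have hJdelta : (deltaR n r)ᵀ * sympJ n * deltaR n r = Jr.map (Int.cast : ℤ → ℝ) := by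
    rw [hdelta_T, deltaR, sympJ, hJr_def]
    rw [Matrix.fromBlocks_multiply, Matrix.fromBlocks_multiply, Matrix.fromBlocks_map]
    congr 1 <;> simp [Matrix.diagonal_map]
  -- entries of (G⁻¹)ᵀ J G⁻¹ rescale to integers
  have hlattice : ∀ G ∈ GrSet n r, ∀ i j : Fin n ⊕ Fin n,
      ∃ k : ℤ, d i * d j * ((G⁻¹)ᵀ * sympJ n * G⁻¹) i j = (k : ℝ) := by
    rintro G ⟨A, hA, rfl⟩ i j
    set δ := deltaR n r
    set B := A⁻¹ with hB_def
    have hAB : A * B = 1 := Matrix.mul_nonsing_inv A hA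
    have hBA : B * A = 1 := Matrix.nonsing_inv_mul A hA
    have hGinv : (δ * A.map (Int.cast : ℤ → ℝ) * δ⁻¹)⁻¹
        = δ * B.map (Int.cast : ℤ → ℝ) * δ⁻¹ := by
      apply Matrix.inv_eq_right_inv
      calc δ * A.map Int.cast * δ⁻¹ * (δ * B.map Int.cast * δ⁻¹)
          = δ * A.map Int.cast * (δ⁻¹ * δ) * B.map Int.cast * δ⁻¹ := by
            noncomm_ring
        _ = δ * (A.map Int.cast * B.map Int.cast) * δ⁻¹ := by
            rw [Matrix.nonsing_inv_mul δ hdelta_unit]; noncomm_ring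
        _ = δ * ((A * B).map Int.cast) * δ⁻¹ := by rw [hmul]
        _ = 1 := by
            rw [hAB]
            simp [Matrix.mul_nonsing_inv δ hdelta_unit]
    rw [hGinv]
    have hTrans : (δ * B.map (Int.cast : ℤ → ℝ) * δ⁻¹)ᵀ
        = δ⁻¹ * (Bᵀ.map (Int.cast : ℤ → ℝ)) * δ := by
      rw [Matrix.transpose_mul, Matrix.transpose_mul, Matrix.transpose_nonsing_inv,
        hdelta_T, Matrix.transpose_map]
      noncomm_ring
    set K : Matrix (Fin n ⊕ Fin n) (Fin n ⊕ Fin n) ℤ := Bᵀ * Jr * B with hK_def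
    have hform : (δ * B.map (Int.cast : ℤ → ℝ) * δ⁻¹)ᵀ * sympJ n
        * (δ * B.map (Int.cast : ℤ → ℝ) * δ⁻¹)
        = δ⁻¹ * (K.map (Int.cast : ℤ → ℝ)) * δ⁻¹ := by
      rw [hTrans, hK_def, hmul, hmul]
      rw [← hJdelta, hdelta_T]
      noncomm_ring
    rw [hform]
    refine ⟨K i j, ?_⟩
    rw [hdelta_inv]
    simp only [Matrix.mul_diagonal, Matrix.diagonal_mul, Matrix.map_apply]
    have hdi := hd i
    have hdj := hd j
    field_simp
  -- now apply the lattice finiteness lemma via the injective map G ↦ (G⁻¹)ᵀ J G⁻¹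
  apply Set.Finite.of_finite_image
    (f := fun G : Matrix (Fin n ⊕ Fin n) (Fin n ⊕ Fin n) ℝ => (G⁻¹)ᵀ * sympJ n * G⁻¹)
  · apply Set.Finite.subset (lattice_ball_finite d hd N hN0 hNadd hNsmul C)
    rintro x ⟨G, ⟨hGU, hGC⟩, rfl⟩
    refine ⟨hlattice G (hU hGU), ?_⟩
    exact hGC
  · rintro G ⟨hGU, -⟩ H ⟨hHU, -⟩ heq
    by_contra hne
    apply hpair G hGU H hHU hne
    have hGdet := hdetGr G (hU hGU)
    have hHdet := hdetGr H (hU hHU)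
    constructor
    · rw [Matrix.det_mul, Matrix.det_nonsing_inv, Ring.inverse_eq_inv]
      rw [isUnit_iff_ne_zero]
      exact mul_ne_zero (inv_ne_zero (isUnit_iff_ne_zero.mp hHdet))
        (isUnit_iff_ne_zero.mp hGdet)
    · left
      have : (H⁻¹ * G)ᵀ * sympJ n * (H⁻¹ * G)
          = Gᵀ * ((H⁻¹)ᵀ * sympJ n * H⁻¹) * G := by
        rw [Matrix.transpose_mul]; noncomm_ring
      have heq' : (G⁻¹)ᵀ * sympJ n * G⁻¹ = (H⁻¹)ᵀ * sympJ n * H⁻¹ := heq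
      rw [this, ← heq']
      have h1 : Gᵀ * (G⁻¹)ᵀ = 1 := by
        rw [← Matrix.transpose_mul, Matrix.nonsing_inv_mul G hGdet, Matrix.transpose_one]
      calc Gᵀ * ((G⁻¹)ᵀ * sympJ n * G⁻¹) * G
          = (Gᵀ * (G⁻¹)ᵀ) * sympJ n * (G⁻¹ * G) := by noncomm_ring
        _ = sympJ n := by
            rw [h1, Matrix.nonsing_inv_mul G hGdet]
            simp
end

section
/- For the sequence Y_k ∈ P_4 given by Y_k = Bᵀ_k B_k with B_k = [[1,k,0,0],[0,1,0,0],[0,0,1,0],[0,0,0,1]], the eigenvalues of (Y_k^{-1}J)² are the roots (each with multiplicity 2) of X² + (k²+2)X + 1 = 0; in particular d_2(Y_k) = 2^{-1/2}√(k²+2+k√(k²+4)), which tends to infinity as k → ∞. -/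
open Matrix Polynomial

/-- The standard symplectic matrix `J` on `ℝ⁴`. -/
def J4 : Matrix (Fin 4) (Fin 4) ℝ :=
  !![0,0,1,0; 0,0,0,1; -1,0,0,0; 0,-1,0,0]

/-- The family of positive definite matrices `Y_k`. -/
def Yk (k : ℕ) : Matrix (Fin 4) (Fin 4) ℝ :=
  !![1,(k:ℝ),0,0; (k:ℝ),(k:ℝ)^2+1,0,0; 0,0,1,0; 0,0,0,1]

/-- `d_2(Y)`: the largest absolute value of an eigenvalue of `Y⁻¹ * J`. -/
noncomputable def d2 (Y : Matrix (Fin 4) (Fin 4) ℝ) : ℝ :=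
  sSup ((fun z : ℂ => ‖z‖) '' spectrum ℂ ((Y⁻¹ * J4).map Complex.ofReal))

lemma det_fin_four' {R : Type*} [CommRing R] (M : Matrix (Fin 4) (Fin 4) R) :
    M.det =
      M 0 0 * (M 1 1 * (M 2 2 * M 3 3 - M 2 3 * M 3 2)
             - M 1 2 * (M 2 1 * M 3 3 - M 2 3 * M 3 1)
             + M 1 3 * (M 2 1 * M 3 2 - M 2 2 * M 3 1))
    - M 0 1 * (M 1 0 * (M 2 2 * M 3 3 - M 2 3 * M 3 2)
             - M 1 2 * (M 2 0 * M 3 3 - M 2 3 * M 3 0)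
             + M 1 3 * (M 2 0 * M 3 2 - M 2 2 * M 3 0))
    + M 0 2 * (M 1 0 * (M 2 1 * M 3 3 - M 2 3 * M 3 1)
             - M 1 1 * (M 2 0 * M 3 3 - M 2 3 * M 3 0)
             + M 1 3 * (M 2 0 * M 3 1 - M 2 1 * M 3 0))
    - M 0 3 * (M 1 0 * (M 2 1 * M 3 2 - M 2 2 * M 3 1)
             - M 1 1 * (M 2 0 * M 3 2 - M 2 2 * M 3 0)
             + M 1 2 * (M 2 0 * M 3 1 - M 2 1 * M 3 0)) := by
  rw [Matrix.det_succ_row_zero, Fin.sum_univ_four]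
  simp (config := { decide := true }) [Matrix.det_fin_three, Fin.succAbove,
    Matrix.submatrix, show (Fin.succ 2 : Fin 4) = 3 from rfl,
    show ((2 : Fin 3).castSucc : Fin 4) = 2 from rfl]
  ring

lemma Yk_inv (k : ℕ) : (Yk k)⁻¹ =
    !![(k:ℝ)^2+1,-(k:ℝ),0,0; -(k:ℝ),1,0,0; 0,0,1,0; 0,0,0,1] := by
  apply Matrix.inv_eq_right_inv
  ext i j
  fin_cases i <;> fin_cases j <;>
    simp [Yk, Matrix.mul_apply, Fin.sum_univ_four, Matrix.vecHead, Matrix.vecTail] <;> ring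

lemma Mk_eq (k : ℕ) : (Yk k)⁻¹ * J4 =
    !![0,0,(k:ℝ)^2+1,-(k:ℝ); 0,0,-(k:ℝ),1; -1,0,0,0; 0,-1,0,0] := by
  rw [Yk_inv]
  ext i j
  fin_cases i <;> fin_cases j <;>
    simp [J4, Matrix.mul_apply, Fin.sum_univ_four, Matrix.vecHead, Matrix.vecTail]

lemma Mk_sq (k : ℕ) : ((Yk k)⁻¹ * J4) ^ 2 =
    !![-((k:ℝ)^2+1),(k:ℝ),0,0; (k:ℝ),-1,0,0;
       0,0,-((k:ℝ)^2+1),(k:ℝ); 0,0,(k:ℝ),-1] := by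
  rw [sq, Mk_eq]
  ext i j
  fin_cases i <;> fin_cases j <;>
    simp [Matrix.mul_apply, Fin.sum_univ_four, Matrix.vecHead, Matrix.vecTail] <;> ring

lemma charpoly_Mk_sq (k : ℕ) : (((Yk k)⁻¹ * J4) ^ 2).charpoly
     = (X ^ 2 + C ((k : ℝ) ^ 2 + 2) * X + 1) ^ 2 := by
  rw [Mk_sq, Matrix.charpoly, det_fin_four']
  simp [charmatrix_apply, Matrix.diagonal, Matrix.vecHead, Matrix.vecTail, map_ofNat]
  ring

lemma Nk_eq (k : ℕ) : ((Yk k)⁻¹ * J4).map Complex.ofReal =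
    !![0,0,(k:ℂ)^2+1,-(k:ℂ); 0,0,-(k:ℂ),1; -1,0,0,0; 0,-1,0,0] := by
  rw [Mk_eq]
  ext i j
  fin_cases i <;> fin_cases j <;>
    simp [Matrix.map_apply, Matrix.vecHead, Matrix.vecTail]

lemma charpoly_Nk (k : ℕ) : (((Yk k)⁻¹ * J4).map Complex.ofReal).charpoly
    = X ^ 4 + C ((k:ℂ)^2 + 2) * X ^ 2 + 1 := by
  rw [Nk_eq, Matrix.charpoly, det_fin_four']
  simp [charmatrix_apply, Matrix.diagonal, Matrix.vecHead, Matrix.vecTail, map_ofNat]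
  ring

lemma mem_spec_iff (M : Matrix (Fin 4) (Fin 4) ℂ) (μ : ℂ) :
    μ ∈ spectrum ℂ M ↔ M.charpoly.eval μ = 0 := by
  have hdet : M.charpoly.eval μ = (algebraMap ℂ (Matrix (Fin 4) (Fin 4) ℂ) μ - M).det := by
    rw [Matrix.charpoly, ← Polynomial.coe_evalRingHom, RingHom.map_det]
    congr 1
    ext i j
    by_cases h : i = j
    · subst h
      simp [charmatrix_apply_eq, Matrix.algebraMap_matrix_apply]
    · simp [charmatrix_apply_ne _ _ _ h, Matrix.algebraMap_matrix_apply, h]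
  rw [spectrum.mem_iff, Matrix.isUnit_iff_isUnit_det, isUnit_iff_ne_zero, not_not, hdet]

/-- Auxiliary: `a_k`, the large eigenvalue modulus. -/
noncomputable def ak (k : ℕ) : ℝ :=
  Real.sqrt (((k:ℝ)^2 + 2 + (k:ℝ) * Real.sqrt ((k:ℝ)^2 + 4)) / 2)

/-- Auxiliary: `b_k`, the small eigenvalue modulus. -/
noncomputable def bk (k : ℕ) : ℝ :=
  Real.sqrt (((k:ℝ)^2 + 2 - (k:ℝ) * Real.sqrt ((k:ℝ)^2 + 4)) / 2)

lemma sk_nonneg (k : ℕ) : 0 ≤ (k:ℝ) * Real.sqrt ((k:ℝ)^2 + 4) :=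
  mul_nonneg (Nat.cast_nonneg k) (Real.sqrt_nonneg _)

lemma sk_sq (k : ℕ) : ((k:ℝ) * Real.sqrt ((k:ℝ)^2 + 4))^2 = (k:ℝ)^2 * ((k:ℝ)^2 + 4) := by
  rw [mul_pow, Real.sq_sqrt (by positivity)]

lemma sk_le (k : ℕ) : (k:ℝ) * Real.sqrt ((k:ℝ)^2 + 4) ≤ (k:ℝ)^2 + 2 := by
  nlinarith [sk_sq k, sk_nonneg k]

lemma ak_sq (k : ℕ) : (ak k)^2 = ((k:ℝ)^2 + 2 + (k:ℝ) * Real.sqrt ((k:ℝ)^2 + 4)) / 2 :=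
  Real.sq_sqrt (by nlinarith [sk_nonneg k])

lemma bk_sq (k : ℕ) : (bk k)^2 = ((k:ℝ)^2 + 2 - (k:ℝ) * Real.sqrt ((k:ℝ)^2 + 4)) / 2 :=
  Real.sq_sqrt (by nlinarith [sk_le k])

lemma ak_nonneg (k : ℕ) : 0 ≤ ak k := Real.sqrt_nonneg _
lemma bk_nonneg (k : ℕ) : 0 ≤ bk k := Real.sqrt_nonneg _

lemma bk_le_ak (k : ℕ) : bk k ≤ ak k :=
  Real.sqrt_le_sqrt (by nlinarith [sk_nonneg k])

lemma sum_sq (k : ℕ) : (ak k)^2 + (bk k)^2 = (k:ℝ)^2 + 2 := by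
  rw [ak_sq, bk_sq]; ring

lemma prod_sq (k : ℕ) : (ak k)^2 * (bk k)^2 = 1 := by
  rw [ak_sq, bk_sq]
  linear_combination (-1/4 : ℝ) * sk_sq k

lemma spec_Nk (k : ℕ) : spectrum ℂ (((Yk k)⁻¹ * J4).map Complex.ofReal) =
    {Complex.I * (ak k : ℂ), -(Complex.I * (ak k : ℂ)),
     Complex.I * (bk k : ℂ), -(Complex.I * (bk k : ℂ))} := by
  have hsum : (ak k : ℂ)^2 + (bk k : ℂ)^2 = (k:ℂ)^2 + 2 := by
    exact_mod_cast congrArg (Complex.ofReal) (sum_sq k)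
  have hprod : (ak k : ℂ)^2 * (bk k : ℂ)^2 = 1 := by
    exact_mod_cast congrArg (Complex.ofReal) (prod_sq k)
  ext z
  rw [mem_spec_iff, charpoly_Nk]
  have hfac : eval z (X ^ 4 + C ((k:ℂ)^2 + 2) * X ^ 2 + 1)
      = (z - Complex.I * (ak k : ℂ)) * (z + Complex.I * (ak k : ℂ))
        * ((z - Complex.I * (bk k : ℂ)) * (z + Complex.I * (bk k : ℂ))) := by
    simp only [eval_add, eval_pow, eval_mul, eval_X, eval_C, eval_one]
    have hI : (Complex.I)^2 = -1 := Complex.I_sq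
    have hI4 : (Complex.I)^4 = 1 := by rw [show (4:ℕ) = 2*2 from rfl, pow_mul, hI]; norm_num
    linear_combination (Complex.I^2 * z^2) * hsum - hprod
      + (((k:ℂ)^2+2) * z^2) * hI - ((ak k:ℂ)^2 * (bk k:ℂ)^2) * hI4
  rw [hfac]
  simp only [mul_eq_zero, sub_eq_zero, add_eq_zero_iff_eq_neg]
  constructor
  · rintro ((h | h) | (h | h)) <;> simp [h, Set.mem_insert_iff]
  · intro h
    simp only [Set.mem_insert_iff, Set.mem_singleton_iff] at h
    rcases h with h | h | h | h <;> simp [h]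

lemma d2_Yk (k : ℕ) : d2 (Yk k) = ak k := by
  rw [d2, spec_Nk]
  have habs : ∀ r : ℝ, 0 ≤ r → ‖Complex.I * (r:ℂ)‖ = r := by
    intro r hr
    simp [Complex.norm_real, abs_of_nonneg hr]
  have h1 := habs _ (ak_nonneg k)
  have h2 := habs _ (bk_nonneg k)
  rw [Set.image_insert_eq, Set.image_insert_eq, Set.image_insert_eq, Set.image_singleton]
  simp only [norm_neg, h1, h2]
  rw [Set.insert_idem, Set.pair_eq_singleton]
  rw [csSup_pair]
  exact sup_eq_left.mpr (bk_le_ak k)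

theorem Yk_eigenvalues_and_d2 :
    (∀ k : ℕ, (((Yk k)⁻¹ * J4) ^ 2).charpoly =
      (X ^ 2 + C ((k : ℝ) ^ 2 + 2) * X + 1) ^ 2) ∧
    (∀ k : ℕ, d2 (Yk k) =
      Real.sqrt ((k : ℝ) ^ 2 + 2 + (k : ℝ) * Real.sqrt ((k : ℝ) ^ 2 + 4)) / Real.sqrt 2) ∧
    Filter.Tendsto (fun k : ℕ => d2 (Yk k)) Filter.atTop Filter.atTop := by
  have hd2 : ∀ k : ℕ, d2 (Yk k) =
      Real.sqrt ((k : ℝ) ^ 2 + 2 + (k : ℝ) * Real.sqrt ((k : ℝ) ^ 2 + 4)) / Real.sqrt 2 := by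
    intro k
    rw [d2_Yk, ak, Real.sqrt_div (by nlinarith [sk_nonneg k]) 2]
  refine ⟨charpoly_Mk_sq, hd2, ?_⟩
  apply Filter.tendsto_atTop_mono (g := fun k : ℕ => d2 (Yk k))
    (f := fun k : ℕ => (k : ℝ) / Real.sqrt 2) (fun k => ?_)
    (Filter.Tendsto.atTop_div_const (by positivity) tendsto_natCast_atTop_atTop)
  rw [hd2 k]
  gcongr
  calc (k : ℝ) = Real.sqrt ((k:ℝ)^2) := (Real.sqrt_sq (Nat.cast_nonneg k)).symm
    _ ≤ _ := Real.sqrt_le_sqrt (by nlinarith [sk_nonneg k])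
end

section
/- Let M be a set of symmetric positive definite n×n matrices contained in Minkowski's fundamental domain, and suppose there exist constants C_0, C_1 > 0 such that m(Y) ≥ C_0 and det(Y) ≤ C_1 for all Y ∈ M. Then M has compact closure in P_n (Hermite–Mahler compactness). -/
open Matrix

namespace HMC

open Finset MeasureTheory Pointwise ENNReal

open scoped MatrixOrder

noncomputable section

variable {ι : Type*} [Fintype ι]

/-- The quadratic form of a matrix. -/
def qf (Y : Matrix ι ι ℝ) (x : ι → ℝ) : ℝ := x ⬝ᵥ Y *ᵥ x

/-- Cast an integer vector to a real vector. -/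
def ci (a : ι → ℤ) : ι → ℝ := fun i => (a i : ℝ)

lemma qf_pos {Y : Matrix ι ι ℝ} (hY : Y.PosDef) {x : ι → ℝ} (hx : x ≠ 0) : 0 < qf Y x := by
  simpa [qf] using hY.dotProduct_mulVec_pos hx

lemma qf_nonneg {Y : Matrix ι ι ℝ} (hY : Y.PosSemidef) (x : ι → ℝ) : 0 ≤ qf Y x := by
  simpa [qf] using hY.dotProduct_mulVec_nonneg x

lemma qf_smul (Y : Matrix ι ι ℝ) (c : ℝ) (x : ι → ℝ) : qf Y (c • x) = c ^ 2 * qf Y x := by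
  simp only [qf, Matrix.mulVec_smul, smul_dotProduct, dotProduct_smul,
    smul_eq_mul]
  ring

lemma ci_ne_zero {a : ι → ℤ} (ha : a ≠ 0) : ci a ≠ 0 := by
  intro h
  apply ha
  funext i
  have := congrFun h i
  simpa [ci] using this

lemma qf_mul_self {N : Matrix ι ι ℝ} (hN : Nᵀ = N) (x : ι → ℝ) :
    qf (N * N) x = ∑ i, (N *ᵥ x) i ^ 2 := by
  have h2 : x ᵥ* N = N *ᵥ x := by
    conv_lhs => rw [← hN, Matrix.vecMul_transpose]
  have h1 : qf (N * N) x = (N *ᵥ x) ⬝ᵥ (N *ᵥ x) := by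
    rw [qf, ← Matrix.mulVec_mulVec, Matrix.dotProduct_mulVec, h2]
  rw [h1]
  simp [dotProduct, sq]

/-- Hermite's bound on the first minimum, via Minkowski's convex body theorem. -/
theorem hermite (m : ℕ) :
    ∃ κ : ℝ, 0 < κ ∧ ∀ Y : Matrix (Fin m) (Fin m) ℝ, Y.PosDef → ∀ C : ℝ, 0 < C →
      (∀ a : Fin m → ℤ, a ≠ 0 → C ≤ qf Y (ci a)) → κ * C ^ m ≤ Y.det := by
  classical
  set B1 : Set (Fin m → ℝ) := {y | ∑ i, y i ^ 2 < 1} with hB1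
  have hB1open : IsOpen B1 := isOpen_lt (by fun_prop) continuous_const
  have hv0 : 0 < volume B1 := hB1open.measure_pos volume ⟨0, by simp [hB1]⟩
  have hvtop : volume B1 < ⊤ := by
    refine lt_of_le_of_lt (measure_mono ?_) (measure_ball_lt_top (x := (0 : Fin m → ℝ)) (r := 2))
    intro y hy
    rw [mem_ball_zero_iff]
    have hpos : (0:ℝ) < 2 := by norm_num
    rw [pi_norm_lt_iff hpos]
    intro i
    have h1 : y i ^ 2 ≤ ∑ j, y j ^ 2 :=
      Finset.single_le_sum (f := fun j => y j ^ 2) (fun j _ => sq_nonneg _) (mem_univ i)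
    have h2 : y i ^ 2 < 1 := lt_of_le_of_lt h1 hy
    have : |y i| < 2 := by nlinarith [abs_nonneg (y i), sq_abs (y i)]
    simpa [Real.norm_eq_abs] using this
  set v : ℝ := (volume B1).toReal with hv
  have hvr : 0 < v := ENNReal.toReal_pos hv0.ne' hvtop.ne
  refine ⟨v ^ 2 / 4 ^ m, by positivity, ?_⟩
  intro Y hY C hC hCm
  set S := CFC.sqrt Y with hSdef
  have hSps : S.PosSemidef := (CFC.sqrt_nonneg Y).posSemidef
  have hSsym : Sᵀ = S := by
    have h := hSps.1
    rwa [Matrix.IsHermitian, Matrix.conjTranspose_eq_transpose_of_trivial] at h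
  have hSS : S * S = Y := CFC.sqrt_mul_sqrt_self Y hY.posSemidef.nonneg
  have hdetsq : S.det * S.det = Y.det := by rw [← Matrix.det_mul, hSS]
  have hdetnn : 0 ≤ S.det := by
    rw [hSps.1.det_eq_prod_eigenvalues]
    refine Finset.prod_nonneg fun i _ => ?_
    simpa using hSps.eigenvalues_nonneg i
  have hdetS : 0 < S.det := by
    rcases hdetnn.lt_or_eq with h | h
    · exact h
    · exfalso
      have := hY.det_pos
      rw [← hdetsq, ← h] at this
      simp at this
  have hqf : ∀ x : Fin m → ℝ, qf Y x = ∑ i, (S *ᵥ x) i ^ 2 := fun x => by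
    rw [← hSS, qf_mul_self hSsym]
  -- the convex body
  set s : Set (Fin m → ℝ) := {x | qf Y x < C} with hs
  -- volume of sublevel sets of the sum of squares
  have hscale : volume {y : Fin m → ℝ | ∑ i, y i ^ 2 < C}
      = ENNReal.ofReal (Real.sqrt C ^ m) * volume B1 := by
    have h1 : {y : Fin m → ℝ | ∑ i, y i ^ 2 < C} = Real.sqrt C • B1 := by
      ext y
      have hsne : Real.sqrt C ≠ 0 := by positivity
      rw [Set.mem_smul_set_iff_inv_smul_mem₀ hsne]
      simp only [Set.mem_setOf_eq, Pi.smul_apply, smul_eq_mul, hB1]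
      have hCsq : Real.sqrt C ^ 2 = C := Real.sq_sqrt hC.le
      have : ∑ i, ((Real.sqrt C)⁻¹ * y i) ^ 2 = C⁻¹ * ∑ i, y i ^ 2 := by
        rw [Finset.mul_sum]
        refine Finset.sum_congr rfl fun i _ => ?_
        rw [mul_pow, ← Real.sqrt_inv, Real.sq_sqrt (by positivity)]
      rw [this]
      rw [inv_mul_lt_iff₀ hC, mul_one]
    rw [h1, Measure.addHaar_smul_of_nonneg volume (Real.sqrt_nonneg C) B1, Module.finrank_fin_fun]
  -- no nonzero lattice point in s
  have hμs : volume s ≤ 2 ^ m := by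
    by_contra hlt
    push_neg at hlt
    set b := Pi.basisFun ℝ (Fin m) with hb
    haveI : IsZLattice ℝ (Submodule.span ℤ (Set.range b)) := instIsZLatticeRealSpan b
    haveI : Countable (Submodule.span ℤ (Set.range b)).toAddSubgroup :=
      inferInstanceAs (Countable (Submodule.span ℤ (Set.range b)))
    have fund := ZSpan.isAddFundamentalDomain' b volume
    have hF : volume (ZSpan.fundamentalDomain b) = 1 := by
      rw [ZSpan.fundamentalDomain_pi_basisFun]
      simp [volume_pi_pi]
    have hsymm : ∀ x ∈ s, -x ∈ s := by
      intro x hx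
      simp only [hs, Set.mem_setOf_eq, qf, Matrix.mulVec_neg, dotProduct_neg,
        neg_dotProduct, neg_neg] at hx ⊢
      exact hx
    have hconv : Convex ℝ s := by
      have : s = (Matrix.toLin' S) ⁻¹' {y | ∑ i, y i ^ 2 < C} := by
        ext x
        simp [hs, hqf, Matrix.toLin'_apply]
      rw [this]
      refine Convex.linear_preimage ?_ _
      have hcv : ConvexOn ℝ Set.univ (fun y : Fin m → ℝ => ∑ i, y i ^ 2) := by
        have h0 : (fun y : Fin m → ℝ => ∑ i, y i ^ 2)
            = ∑ i : Fin m, (fun y : Fin m → ℝ => y i ^ 2) := by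
          funext y
          simp
        rw [h0]
        refine Finset.sum_induction _ (fun f : (Fin m → ℝ) → ℝ => ConvexOn ℝ Set.univ f)
          (fun f g hf hg => hf.add hg) (convexOn_const 0 convex_univ) fun i _ => ?_
        have hp : ConvexOn ℝ Set.univ fun x : ℝ => x ^ 2 := Even.convexOn_pow even_two
        exact hp.comp_linearMap (LinearMap.proj (φ := fun _ : Fin m => ℝ) i)
      simpa using hcv.convex_lt C
    obtain ⟨x, hx0, hxs⟩ :=
      exists_ne_zero_mem_lattice_of_measure_mul_two_pow_lt_measure (μ := volume) fund hsymm hconv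
        (by rw [hF, one_mul, Module.finrank_fin_fun]; exact hlt)
    have hint : ∀ i, ∃ z : ℤ, (z : ℝ) = (x : Fin m → ℝ) i := by
      intro i
      have hmem : (x : Fin m → ℝ) ∈ Submodule.span ℤ (Set.range b) := by
        have := x.2
        rwa [Submodule.mem_toAddSubgroup] at this
      have h := (b.mem_span_iff_repr_mem ℤ (x : Fin m → ℝ)).mp hmem i
      obtain ⟨z, hz⟩ := h
      exact ⟨z, by simpa [hb, Pi.basisFun_repr] using hz⟩
    choose a ha using hint
    have hane : a ≠ 0 := by
      intro h0
      apply hx0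
      have : (x : Fin m → ℝ) = 0 := by
        funext i
        rw [← ha i, h0]
        simp
      exact Subtype.ext (by simpa using this)
    have hcia : ci a = (x : Fin m → ℝ) := funext fun i => ha i
    have h1 := hCm a hane
    rw [hcia] at h1
    have h2 : qf Y (x : Fin m → ℝ) < C := hxs
    linarith
  -- compute volume s
  have hsvol : volume s = ENNReal.ofReal (S.det)⁻¹ * (ENNReal.ofReal (Real.sqrt C ^ m) * volume B1) := by
    have hpre : s = (Matrix.toLin' S) ⁻¹' {y | ∑ i, y i ^ 2 < C} := by
      ext x
      simp [hs, hqf, Matrix.toLin'_apply]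
    have hdet' : LinearMap.det (Matrix.toLin' S) = S.det := LinearMap.det_toLin' S
    rw [hpre, Measure.addHaar_preimage_linearMap volume (by rw [hdet']; exact hdetS.ne'), hscale,
      hdet']
    rw [abs_of_pos (by positivity)]
  rw [hsvol] at hμs
  -- extract real inequality
  have hfin : (2 : ℝ≥0∞) ^ m ≠ ⊤ := by
    exact (ENNReal.pow_ne_top (by norm_num))
  have hreal : (S.det)⁻¹ * (Real.sqrt C ^ m * v) ≤ 2 ^ m := by
    have := ENNReal.toReal_mono hfin hμs
    rw [ENNReal.toReal_mul, ENNReal.toReal_mul, ENNReal.toReal_ofReal (by positivity),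
      ENNReal.toReal_ofReal (by positivity)] at this
    simpa [ENNReal.toReal_pow, hv] using this
  have hkey : Real.sqrt C ^ m * v ≤ 2 ^ m * S.det := by
    rw [inv_mul_le_iff₀ hdetS] at hreal
    calc Real.sqrt C ^ m * v ≤ S.det * 2 ^ m := hreal
    _ = 2 ^ m * S.det := by ring
  have hsq : (Real.sqrt C ^ m * v) ^ 2 ≤ (2 ^ m * S.det) ^ 2 := by
    refine pow_le_pow_left₀ (by positivity) hkey 2
  have hCm' : (Real.sqrt C ^ m) ^ 2 = C ^ m := by
    rw [← pow_mul, mul_comm, pow_mul, Real.sq_sqrt hC.le]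
  have h4 : ((2:ℝ) ^ m) ^ 2 = 4 ^ m := by
    rw [← pow_mul, mul_comm, pow_mul]
    norm_num
  rw [mul_pow, mul_pow, hCm', h4] at hsq
  rw [div_mul_eq_mul_div, div_le_iff₀ (by positivity)]
  calc v ^ 2 * C ^ m = C ^ m * v ^ 2 := by ring
  _ ≤ 4 ^ m * S.det ^ 2 := hsq
  _ = (S.det * S.det) * 4 ^ m := by ring
  _ = Y.det * 4 ^ m := by rw [hdetsq]

section Reduced

variable {n : ℕ}

/-- Minkowski reduction conditions (the quadratic inequalities). -/
def Reduced (Y : Matrix (Fin n) (Fin n) ℝ) : Prop :=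
  ∀ (k : Fin n) (a : Fin n → ℤ),
    ((Finset.univ.filter (fun j : Fin n => k ≤ j)).gcd fun j => (a j).natAbs) = 1 →
    Y k k ≤ qf Y (ci a)

lemma gcd_eq_one_of_one {α : Type*} {s : Finset α} {f : α → ℕ} {j : α} (hj : j ∈ s)
    (hfj : f j = 1) : s.gcd f = 1 :=
  Nat.dvd_one.mp (hfj ▸ Finset.gcd_dvd hj)

lemma gcd_congr {α β : Type*} {s : Finset α} {t : Finset β} {f : α → ℕ} {g : β → ℕ}
    (h : ∀ d : ℕ, (∀ i ∈ s, d ∣ f i) ↔ (∀ j ∈ t, d ∣ g j)) : s.gcd f = t.gcd g := by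
  refine Nat.dvd_antisymm ?_ ?_
  · exact Finset.dvd_gcd fun j hj => (h _).mp (fun i hi => Finset.gcd_dvd hi) j hj
  · exact Finset.dvd_gcd fun i hi => (h _).mpr (fun j hj => Finset.gcd_dvd hj) i hi

variable {ι : Type*} [Fintype ι] [DecidableEq ι]

lemma ci_single (i : ι) (z : ℤ) : ci (Pi.single i z) = Pi.single i (z : ℝ) := by
  funext j
  rcases eq_or_ne j i with rfl | hne
  · simp [ci]
  · simp [ci, Pi.single_eq_of_ne hne]

lemma qf_single (Y : Matrix ι ι ℝ) (i : ι) : qf Y (Pi.single i 1) = Y i i := by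
  simp [qf]

lemma transpose_eq_self {Y : Matrix ι ι ℝ} (hY : Y.IsHermitian) : Yᵀ = Y := by
  rw [← Matrix.conjTranspose_eq_transpose_of_trivial]
  exact hY

lemma symm_apply {Y : Matrix ι ι ℝ} (hY : Y.IsHermitian) (i j : ι) : Y j i = Y i j := by
  rw [← Matrix.transpose_apply Y i j, transpose_eq_self hY]

lemma diag_pos {Y : Matrix ι ι ℝ} (hY : Y.PosDef) (i : ι) : 0 < Y i i := by
  rw [← qf_single Y i]
  refine qf_pos hY fun h => ?_
  have := congrFun h i
  simp at this

lemma qf_single_add_single {Y : Matrix ι ι ℝ} (hT : Yᵀ = Y) {i j : ι} (hij : i ≠ j) (c d : ℝ) :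
    qf Y (Pi.single i c + Pi.single j d)
      = c ^ 2 * Y i i + 2 * c * d * Y i j + d ^ 2 * Y j j := by
  have hji : Y j i = Y i j := by rw [← Matrix.transpose_apply Y i j, hT]
  simp only [qf, Matrix.mulVec_add, Matrix.mulVec_single, dotProduct_add,
    add_dotProduct, single_dotProduct, Pi.add_apply, Pi.single_eq_same,
    Pi.single_eq_of_ne hij, Pi.single_eq_of_ne hij.symm, hji, Pi.smul_apply, op_smul_eq_mul,
    Matrix.col_apply]
  ring

section FinLemmas

variable {Y : Matrix (Fin n) (Fin n) ℝ}

lemma diag_mono (hR : Reduced Y) {i j : Fin n} (h : i ≤ j) : Y i i ≤ Y j j := by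
  have hgcd : ((Finset.univ.filter (fun l : Fin n => i ≤ l)).gcd
      fun l => ((Pi.single j 1 : Fin n → ℤ) l).natAbs) = 1 := by
    refine gcd_eq_one_of_one (Finset.mem_filter.mpr ⟨Finset.mem_univ j, h⟩) ?_
    show ((Pi.single j (1:ℤ) : Fin n → ℤ) j).natAbs = 1
    simp
  have := hR i (Pi.single j 1) hgcd
  rwa [ci_single, Int.cast_one, qf_single] at this

lemma offdiag_bound (hY : Y.PosDef) (hR : Reduced Y) {i j : Fin n} (hij : i < j) :
    |2 * Y i j| ≤ Y i i := by
  have hne : i ≠ j := Fin.ne_of_lt hij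
  have key : ∀ e : ℤ, e.natAbs = 1 →
      Y j j ≤ 1 ^ 2 * Y i i + 2 * 1 * (e : ℝ) * Y i j + (e : ℝ) ^ 2 * Y j j := by
    intro e he
    have hgcd : ((Finset.univ.filter (fun l : Fin n => j ≤ l)).gcd
        fun l => ((Pi.single i 1 + Pi.single j e : Fin n → ℤ) l).natAbs) = 1 := by
      refine gcd_eq_one_of_one (Finset.mem_filter.mpr ⟨Finset.mem_univ j, le_refl j⟩) ?_
      show ((Pi.single i 1 + Pi.single j e : Fin n → ℤ) j).natAbs = 1
      simp [Pi.single_eq_of_ne hne.symm, he]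
    have h1 := hR j (Pi.single i 1 + Pi.single j e) hgcd
    have h2 : ci (Pi.single i 1 + Pi.single j e)
        = Pi.single i (1:ℝ) + Pi.single j ((e:ℤ) : ℝ) := by
      funext l
      rcases eq_or_ne l i with rfl | hli
      · simp [ci, Pi.single_eq_of_ne hne]
      rcases eq_or_ne l j with rfl | hlj
      · simp [ci, Pi.single_eq_of_ne hne.symm, Pi.single_eq_of_ne hli]
      · simp [ci, Pi.single_eq_of_ne hli, Pi.single_eq_of_ne hlj]
    rw [h2, qf_single_add_single (transpose_eq_self hY.1) hne] at h1
    exact h1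
  have h1 := key 1 rfl
  have h2 := key (-1) (by simp)
  push_cast at h1 h2
  rw [abs_le]
  constructor <;> nlinarith

lemma exists_primitive {a : ι → ℤ} (ha : a ≠ 0) :
    ∃ (g : ℕ) (b : ι → ℤ), 0 < g ∧ (∀ i, a i = g * b i) ∧
      (Finset.univ.gcd fun i => (b i).natAbs) = 1 := by
  classical
  set g := Finset.univ.gcd fun i => (a i).natAbs with hg
  have hg0 : g ≠ 0 := by
    intro h0
    apply ha
    funext i
    have := Finset.gcd_eq_zero_iff.mp (hg ▸ h0) i (Finset.mem_univ i)
    simpa [Int.natAbs_eq_zero] using this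
  have hdvd : ∀ i, (g : ℤ) ∣ a i := fun i =>
    Int.dvd_natAbs.mp (Int.natCast_dvd_natCast.mpr (Finset.gcd_dvd (Finset.mem_univ i)))
  refine ⟨g, fun i => a i / g, Nat.pos_of_ne_zero hg0, fun i => (Int.mul_ediv_cancel' (hdvd i)).symm, ?_⟩
  have habs : ∀ i, (a i).natAbs = g * (a i / g).natAbs := by
    intro i
    conv_lhs => rw [← Int.mul_ediv_cancel' (hdvd i)]
    rw [Int.natAbs_mul]
    simp
  have hgg : g = g * Finset.univ.gcd fun i => (a i / g).natAbs := by
    conv_lhs => rw [hg]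
    rw [show (fun i => (a i).natAbs) = fun i => g * (a i / g).natAbs from funext habs]
    rw [Finset.gcd_mul_left]
    simp
  have := Nat.eq_of_mul_eq_mul_left (Nat.pos_of_ne_zero hg0) (hgg.symm.trans (mul_one g).symm)
  exact this

lemma min_at_zero (hY : Y.PosDef) (hR : Reduced Y) (npos : 0 < n) {a : Fin n → ℤ} (ha : a ≠ 0) :
    Y ⟨0, npos⟩ ⟨0, npos⟩ ≤ qf Y (ci a) := by
  obtain ⟨g, b, hg, hab, hb1⟩ := exists_primitive ha
  have hbne : b ≠ 0 := by
    intro h0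
    apply ha
    funext i
    rw [hab i, h0]
    simp
  have h1 : Y ⟨0, npos⟩ ⟨0, npos⟩ ≤ qf Y (ci b) := by
    refine hR ⟨0, npos⟩ b ?_
    have hfil : Finset.filter (fun j : Fin n => (⟨0, npos⟩ : Fin n) ≤ j) Finset.univ
        = Finset.univ := Finset.filter_true_of_mem fun j _ => by simp [Fin.le_def]
    rw [hfil]
    exact hb1
  have h2 : ci a = (g : ℝ) • ci b := by
    funext i
    simp only [ci, hab i, Pi.smul_apply, smul_eq_mul]
    push_cast
    ring
  rw [h2, qf_smul]
  have h3 : 0 < qf Y (ci b) := qf_pos hY (ci_ne_zero hbne)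
  have hg1 : (1 : ℝ) ≤ (g : ℝ) := by exact_mod_cast hg
  have hg2 : (1 : ℝ) ≤ (g : ℝ) ^ 2 := by nlinarith
  calc Y ⟨0, npos⟩ ⟨0, npos⟩ ≤ qf Y (ci b) := h1
  _ = 1 * qf Y (ci b) := (one_mul _).symm
  _ ≤ (g : ℝ) ^ 2 * qf Y (ci b) := mul_le_mul_of_nonneg_right hg2 h3.le

end FinLemmas

end Reduced

section Schur

variable {K L : ℕ}

lemma qf_zero (Y : Matrix ι ι ℝ) : qf Y 0 = 0 := by simp [qf]

lemma qf_fromBlocks (A : Matrix (Fin K) (Fin K) ℝ) (B : Matrix (Fin K) (Fin L) ℝ)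
    (C : Matrix (Fin L) (Fin K) ℝ) (D : Matrix (Fin L) (Fin L) ℝ)
    (x : Fin K → ℝ) (u : Fin L → ℝ) :
    qf (Matrix.fromBlocks A B C D) (Sum.elim x u)
      = x ⬝ᵥ A *ᵥ x + x ⬝ᵥ B *ᵥ u + (u ⬝ᵥ C *ᵥ x + u ⬝ᵥ D *ᵥ u) := by
  rw [qf, Matrix.fromBlocks_mulVec]
  simp only [Sum.elim_comp_inl, Sum.elim_comp_inr]
  rw [sumElim_dotProduct_sumElim, dotProduct_add, dotProduct_add]

lemma schur_identity {A : Matrix (Fin K) (Fin K) ℝ} (B : Matrix (Fin K) (Fin L) ℝ)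
    (D : Matrix (Fin L) (Fin L) ℝ) (hA : A.PosDef) (hAT : Aᵀ = A)
    (x : Fin K → ℝ) (u : Fin L → ℝ) :
    qf (Matrix.fromBlocks A B Bᵀ D) (Sum.elim x u)
      = qf A (x + A⁻¹ *ᵥ (B *ᵥ u)) + qf (D - Bᵀ * A⁻¹ * B) u := by
  have hUnit : IsUnit A.det := isUnit_iff_ne_zero.mpr hA.det_pos.ne'
  set g := A⁻¹ *ᵥ (B *ᵥ u) with hg
  have hAg : A *ᵥ g = B *ᵥ u := by
    rw [hg, Matrix.mulVec_mulVec, Matrix.mul_nonsing_inv A hUnit, Matrix.one_mulVec]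
  have hsymm : ∀ v w : Fin K → ℝ, v ⬝ᵥ A *ᵥ w = w ⬝ᵥ A *ᵥ v := by
    intro v w
    have h2 : v ᵥ* A = A *ᵥ v := by conv_lhs => rw [← hAT, Matrix.vecMul_transpose]
    rw [Matrix.dotProduct_mulVec, h2, dotProduct_comm]
  have hBt : ∀ w : Fin K → ℝ, u ⬝ᵥ Bᵀ *ᵥ w = (B *ᵥ u) ⬝ᵥ w := by
    intro w
    rw [Matrix.dotProduct_mulVec, Matrix.vecMul_transpose]
  have e1 : qf A (x + g) = x ⬝ᵥ A *ᵥ x + x ⬝ᵥ A *ᵥ g + (g ⬝ᵥ A *ᵥ x + g ⬝ᵥ A *ᵥ g) := by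
    rw [qf, Matrix.mulVec_add, add_dotProduct, dotProduct_add,
      dotProduct_add]
  have e3 : g ⬝ᵥ A *ᵥ x = x ⬝ᵥ B *ᵥ u := by rw [hsymm g x, hAg]
  have e5 : qf (D - Bᵀ * A⁻¹ * B) u = u ⬝ᵥ D *ᵥ u - g ⬝ᵥ B *ᵥ u := by
    rw [qf, Matrix.sub_mulVec, dotProduct_sub]
    congr 1
    rw [Matrix.mul_assoc, ← Matrix.mulVec_mulVec, ← Matrix.mulVec_mulVec, hBt,
      dotProduct_comm]
  have e6 : u ⬝ᵥ Bᵀ *ᵥ x = x ⬝ᵥ B *ᵥ u := by rw [hBt, dotProduct_comm]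
  rw [qf_fromBlocks, e1, e5, e6, hAg, e3]
  have e7 : g ⬝ᵥ B *ᵥ u = g ⬝ᵥ B *ᵥ u := rfl
  ring

lemma qf_abs_bound (A : Matrix (Fin K) (Fin K) ℝ) (δ : Fin K → ℝ) (hδ : ∀ i, |δ i| ≤ 1 / 2) :
    qf A δ ≤ (1 / 4) * ∑ i, ∑ j, |A i j| := by
  have h1 : qf A δ = ∑ i, ∑ j, δ i * (A i j * δ j) := by
    simp [qf, dotProduct, Matrix.mulVec, Finset.mul_sum]
  rw [h1, Finset.mul_sum]
  refine Finset.sum_le_sum fun i _ => ?_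
  rw [Finset.mul_sum]
  refine Finset.sum_le_sum fun j _ => ?_
  calc δ i * (A i j * δ j) ≤ |δ i * (A i j * δ j)| := le_abs_self _
  _ = |δ i| * (|A i j| * |δ j|) := by rw [abs_mul, abs_mul]
  _ ≤ (1 / 2) * (|A i j| * (1 / 2)) := by
      refine mul_le_mul (hδ i) ?_ (by positivity) (by norm_num)
      exact mul_le_mul_of_nonneg_left (hδ j) (abs_nonneg _)
  _ = 1 / 4 * |A i j| := by ring

end Schur

section GapStep

variable {n : ℕ}

lemma gap_step {K : ℕ} (hK0 : 0 < K) (hKn : K < n)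
    {Y : Matrix (Fin n) (Fin n) ℝ} (hY : Y.PosDef) (hR : Reduced Y)
    {c : ℝ} (hc : 0 < c)
    (hcA : ∀ Z : Matrix (Fin K) (Fin K) ℝ, Z.PosDef → Reduced Z → ∏ i, Z i i ≤ c * Z.det)
    {κ : ℝ} (hκ : 0 < κ)
    (hκS : ∀ S' : Matrix (Fin (n - K)) (Fin (n - K)) ℝ, S'.PosDef → ∀ C : ℝ, 0 < C →
      (∀ u : Fin (n - K) → ℤ, u ≠ 0 → C ≤ qf S' (ci u)) → κ * C ^ (n - K) ≤ S'.det)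
    {T : ℝ} (hT1 : 1 ≤ T) (hT2 : (n : ℝ) ^ 2 ≤ T)
    (hgap : T * Y ⟨K - 1, by omega⟩ ⟨K - 1, by omega⟩ < Y ⟨K, hKn⟩ ⟨K, hKn⟩)
    (hchain : ∀ j : Fin n, K ≤ (j : ℕ) → Y j j ≤ T ^ n * Y ⟨K, hKn⟩ ⟨K, hKn⟩) :
    ∏ i, Y i i ≤ c * T ^ (n * n) * 2 ^ n * κ⁻¹ * Y.det := by
  classical
  set L := n - K with hLdef
  have hKL : K + L = n := by omega
  have hL0 : 0 < L := by omega
  have hLn : L ≤ n := by omega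
  set e : Fin K ⊕ Fin L ≃ Fin n := finSumFinEquiv.trans (finCongr hKL) with he
  have heL : ∀ i : Fin K, (e (Sum.inl i) : ℕ) = (i : ℕ) := fun i => by
    simp [he, finSumFinEquiv_apply_left]
  have heR : ∀ t : Fin L, (e (Sum.inr t) : ℕ) = K + (t : ℕ) := fun t => by
    simp [he, finSumFinEquiv_apply_right]
  set F := Y.submatrix e e with hF
  set A := F.toBlocks₁₁ with hA
  set B := F.toBlocks₁₂ with hB
  set D := F.toBlocks₂₂ with hD
  have hsymY : ∀ p q : Fin n, Y p q = Y q p := fun p q => symm_apply hY.1 q p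
  have hFsplit : F = Matrix.fromBlocks A B Bᵀ D := by
    have h21 : F.toBlocks₂₁ = Bᵀ := by
      ext i j
      simp only [Matrix.toBlocks₂₁, Matrix.toBlocks₁₂, Matrix.transpose_apply, Matrix.of_apply,
        hF, Matrix.submatrix_apply, hB]
      exact hsymY _ _
    rw [← h21]
    exact (Matrix.fromBlocks_toBlocks F).symm
  have hdotc : ∀ p q : Fin n → ℝ, (p ∘ e) ⬝ᵥ (q ∘ e) = p ⬝ᵥ q := by
    intro p q
    simpa [dotProduct, Function.comp] using e.sum_comp fun j => p j * q j
  have hqfF : ∀ w : Fin K ⊕ Fin L → ℝ, qf F w = qf Y (w ∘ e.symm) := by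
    intro w
    have hw : w = (w ∘ e.symm) ∘ e := by funext s; simp
    rw [qf, hF, Matrix.submatrix_mulVec_equiv]
    calc w ⬝ᵥ ((Y *ᵥ (w ∘ e.symm)) ∘ ⇑e)
        = ((w ∘ e.symm) ∘ e) ⬝ᵥ ((Y *ᵥ (w ∘ e.symm)) ∘ e) := by rw [← hw]
    _ = (w ∘ e.symm) ⬝ᵥ (Y *ᵥ (w ∘ e.symm)) := hdotc _ _
  have helim_ne : ∀ (x : Fin K → ℝ) (u : Fin L → ℝ), u ≠ 0 →
      (Sum.elim x u) ∘ e.symm ≠ 0 := by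
    intro x u hu h0
    apply hu
    funext t
    have := congrFun h0 (e (Sum.inr t))
    simpa using this
  have hqfA0 : ∀ x : Fin K → ℝ, qf F (Sum.elim x 0) = qf A x := by
    intro x
    rw [hFsplit, qf_fromBlocks]
    simp [qf]
  have hApos : A.PosDef := by
    refine Matrix.PosDef.of_dotProduct_mulVec_pos ?_ ?_
    · ext i j
      simp only [Matrix.conjTranspose_apply, star_trivial, hA, hF, Matrix.toBlocks₁₁,
        Matrix.of_apply, Matrix.submatrix_apply]
      exact hsymY _ _
    · intro x hx
      have h1 := hqfA0 x
      rw [hqfF] at h1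
      have h2 : (0:ℝ) < qf Y ((Sum.elim x (0 : Fin L → ℝ)) ∘ e.symm) := by
        refine qf_pos hY ?_
        intro h0
        apply hx
        funext i
        have := congrFun h0 (e (Sum.inl i))
        simpa using this
      have hst : star x = x := funext fun i => star_trivial _
      rw [hst]
      show 0 < qf A x
      rw [← h1]
      exact h2
  have hAT : Aᵀ = A := transpose_eq_self hApos.1
  have hDT : Dᵀ = D := by
    ext i j
    simp only [Matrix.transpose_apply, hD, hF, Matrix.toBlocks₂₂, Matrix.of_apply,
      Matrix.submatrix_apply]
    exact hsymY _ _
  haveI : Invertible A := A.invertibleOfIsUnitDet (isUnit_iff_ne_zero.mpr hApos.det_pos.ne')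
  set S := D - Bᵀ * A⁻¹ * B with hSdef
  have hdetY : Y.det = A.det * S.det := by
    have h1 : F.det = Y.det := Matrix.det_submatrix_equiv_self e Y
    rw [hSdef, ← h1, hFsplit, Matrix.det_fromBlocks₁₁, Matrix.invOf_eq_nonsing_inv]
  have hSchur : ∀ (x : Fin K → ℝ) (u : Fin L → ℝ),
      qf Y ((Sum.elim x u) ∘ e.symm) = qf A (x + A⁻¹ *ᵥ (B *ᵥ u)) + qf S u := by
    intro x u
    rw [← hqfF, hFsplit, schur_identity B D hApos hAT, hSdef]
  have hSpos : S.PosDef := by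
    refine Matrix.PosDef.of_dotProduct_mulVec_pos ?_ ?_
    · show Sᴴ = S
      rw [Matrix.conjTranspose_eq_transpose_of_trivial, hSdef, Matrix.transpose_sub,
        Matrix.transpose_mul, Matrix.transpose_mul, Matrix.transpose_transpose,
        Matrix.transpose_nonsing_inv, hAT, hDT, Matrix.mul_assoc]
    · intro u hu
      have hst : star u = u := funext fun i => star_trivial _
      rw [hst]
      show 0 < qf S u
      have hx := hSchur (-(A⁻¹ *ᵥ (B *ᵥ u))) u
      rw [neg_add_cancel, qf_zero, zero_add] at hx
      rw [← hx]
      exact qf_pos hY (helim_ne _ _ hu)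
  -- A is reduced
  have hAred : Reduced A := by
    intro k a hk
    set w : Fin n → ℤ := Sum.elim a 0 ∘ e.symm with hw
    have hciw : ci w = (Sum.elim (ci a) (0 : Fin L → ℝ)) ∘ e.symm := by
      funext j
      rcases h : e.symm j with i | t <;>
        simp [ci, hw, Function.comp, h]
    have hgcd : ((Finset.univ.filter fun j : Fin n => e (Sum.inl k) ≤ j).gcd
        fun j => (w j).natAbs) = 1 := by
      refine (gcd_congr ?_).trans hk
      intro d
      constructor
      · intro hall i hi
        have hki : k ≤ i := (Finset.mem_filter.mp hi).2
        have hmem : e (Sum.inl i) ∈ Finset.univ.filter fun j : Fin n => e (Sum.inl k) ≤ j := by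
          refine Finset.mem_filter.mpr ⟨Finset.mem_univ _, ?_⟩
          rw [Fin.le_def, heL, heL]
          exact hki
        have h1 := hall _ hmem
        have h2 : w (e (Sum.inl i)) = a i := by simp [hw]
        rwa [h2] at h1
      · intro hall j hj
        rcases h : e.symm j with i | t
        · have hji : j = e (Sum.inl i) := by rw [← h]; simp
          have hkj : e (Sum.inl k) ≤ j := (Finset.mem_filter.mp hj).2
          have hki : k ≤ i := by
            rw [hji, Fin.le_def, heL, heL] at hkj
            exact hkj
          have h2 : w j = a i := by rw [hw]; simp [h]
          rw [h2]
          exact hall i (Finset.mem_filter.mpr ⟨Finset.mem_univ _, hki⟩)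
        · have h2 : w j = 0 := by rw [hw]; simp [h]
          rw [h2]
          simp
    have h1 := hR (e (Sum.inl k)) w hgcd
    have h2 : qf Y (ci w) = qf A (ci a) := by
      rw [hciw, ← hqfF, hFsplit, qf_fromBlocks]
      simp [qf]
    rw [h2] at h1
    exact h1
  set kK : Fin n := ⟨K, hKn⟩ with hkK
  set km : Fin n := ⟨K - 1, by omega⟩ with hkm
  have hYkKpos : 0 < Y kK kK := diag_pos hY kK
  have hYkmpos : 0 < Y km km := diag_pos hY km
  have habsA : ∑ i, ∑ j, |A i j| ≤ (K:ℝ)^2 * Y km km := by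
    have hle : ∀ i₀ : Fin K, e (Sum.inl i₀) ≤ km := by
      intro i₀
      rw [Fin.le_def, heL]
      have := i₀.isLt
      simp [hkm]
      omega
    have hbound : ∀ i j : Fin K, |A i j| ≤ Y km km := by
      intro i j
      have hAij : A i j = Y (e (Sum.inl i)) (e (Sum.inl j)) := rfl
      rcases eq_or_ne i j with rfl | hij
      · rw [hAij, abs_of_pos (diag_pos hY _)]
        exact le_trans (diag_mono hR (hle i)) (le_refl _)
      · have hne' : e (Sum.inl i) ≠ e (Sum.inl j) := by
          intro hcontra
          exact hij (Sum.inl_injective (e.injective hcontra))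
        rcases lt_or_gt_of_ne hne' with hlt | hgt
        · have h1 := offdiag_bound hY hR hlt
          have h2 := diag_mono hR (hle i)
          rw [hAij]
          rw [abs_mul] at h1
          have h3 : |(2:ℝ)| = 2 := by norm_num
          rw [h3] at h1
          have h4 := abs_nonneg (Y (e (Sum.inl i)) (e (Sum.inl j)))
          have h5 := diag_pos hY (e (Sum.inl i))
          linarith
        · have h1 := offdiag_bound hY hR hgt
          have h2 := diag_mono hR (hle j)
          rw [hAij, hsymY (e (Sum.inl i)) (e (Sum.inl j))]
          rw [abs_mul] at h1
          have h3 : |(2:ℝ)| = 2 := by norm_num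
          rw [h3] at h1
          have h4 := abs_nonneg (Y (e (Sum.inl j)) (e (Sum.inl i)))
          have h5 := diag_pos hY (e (Sum.inl j))
          linarith
    calc ∑ i, ∑ j, |A i j| ≤ ∑ _i : Fin K, ∑ _j : Fin K, Y km km :=
          Finset.sum_le_sum fun i _ => Finset.sum_le_sum fun j _ => hbound i j
    _ = (K:ℝ)^2 * Y km km := by
        simp [Finset.sum_const, Finset.card_univ, nsmul_eq_mul]
        ring
  have hKT : (K:ℝ)^2 ≤ T := by
    refine le_trans ?_ hT2
    have : (K:ℝ) ≤ (n:ℝ) := by exact_mod_cast hKn.le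
    have hK0' : (0:ℝ) ≤ (K:ℝ) := by positivity
    nlinarith
  have hSprim : ∀ u : Fin L → ℤ, (Finset.univ.gcd fun t => (u t).natAbs) = 1 →
      (3/4) * Y kK kK ≤ qf S (ci u) := by
    intro u hu
    set v := A⁻¹ *ᵥ (B *ᵥ ci u) with hv
    set a' : Fin K → ℤ := fun i => -round (v i) with ha'
    set w : Fin n → ℤ := Sum.elim a' u ∘ e.symm with hw
    have hciw : ci w = (Sum.elim (ci a') (ci u)) ∘ e.symm := by
      funext j
      rcases h : e.symm j with i | t <;>
        simp [ci, hw, Function.comp, h]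
    have hgcd : ((Finset.univ.filter fun j : Fin n => kK ≤ j).gcd
        fun j => (w j).natAbs) = 1 := by
      refine (gcd_congr ?_).trans hu
      intro d
      constructor
      · intro hall t _
        have hmem : e (Sum.inr t) ∈ Finset.univ.filter fun j : Fin n => kK ≤ j := by
          refine Finset.mem_filter.mpr ⟨Finset.mem_univ _, ?_⟩
          rw [Fin.le_def, heR]
          simp [hkK]
        have h1 := hall _ hmem
        have h2 : w (e (Sum.inr t)) = u t := by simp [hw]
        rwa [h2] at h1
      · intro hall j hj
        rcases h : e.symm j with i | t
        · exfalso
          have hji : j = e (Sum.inl i) := by rw [← h]; simp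
          have hkj : kK ≤ j := (Finset.mem_filter.mp hj).2
          rw [hji, Fin.le_def, heL] at hkj
          have := i.isLt
          simp [hkK] at hkj
          omega
        · have h2 : w j = u t := by rw [hw]; simp [h]
          rw [h2]
          exact hall t (Finset.mem_univ t)
    have h1 := hR kK w hgcd
    have h2 : qf Y (ci w) = qf A (ci a' + v) + qf S (ci u) := by
      rw [hciw, hSchur]
    have h3 : qf A (ci a' + v) ≤ (1/4) * ∑ i, ∑ j, |A i j| := by
      refine qf_abs_bound A _ fun i => ?_
      have heq : (ci a' + v) i = v i - round (v i) := by
        simp only [Pi.add_apply, ci, ha']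
        push_cast
        ring
      rw [heq, abs_sub_comm]
      have := abs_sub_round (v i)
      rw [abs_sub_comm] at this
      exact this
    rw [h2] at h1
    have h5 : (K:ℝ)^2 * Y km km ≤ T * Y km km :=
      mul_le_mul_of_nonneg_right hKT hYkmpos.le
    linarith
  have hSall : ∀ u : Fin L → ℤ, u ≠ 0 → (1/2) * Y kK kK ≤ qf S (ci u) := by
    intro u hu
    obtain ⟨g, b, hg, hab, hb1⟩ := exists_primitive hu
    have hbne : b ≠ 0 := by
      intro h0
      apply hu
      funext i
      rw [hab i, h0]
      simp
    have h2 : ci u = (g : ℝ) • ci b := by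
      funext i
      simp only [ci, hab i, Pi.smul_apply, smul_eq_mul]
      push_cast
      ring
    rw [h2, qf_smul]
    have h3 := hSprim b hb1
    have h4 : 0 < qf S (ci b) := qf_pos hSpos (ci_ne_zero hbne)
    have hg1 : (1 : ℝ) ≤ (g : ℝ) := by exact_mod_cast hg
    have hg2 : (1 : ℝ) ≤ (g : ℝ) ^ 2 := by nlinarith
    calc (1/2) * Y kK kK ≤ (3/4) * Y kK kK := by linarith
    _ ≤ qf S (ci b) := h3
    _ = 1 * qf S (ci b) := (one_mul _).symm
    _ ≤ (g : ℝ) ^ 2 * qf S (ci b) := mul_le_mul_of_nonneg_right hg2 h4.le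
  have hSdet : κ * ((1/2) * Y kK kK) ^ L ≤ S.det :=
    hκS S hSpos _ (by positivity) hSall
  have hDbound : ∀ t : Fin L, D t t ≤ T ^ n * Y kK kK := by
    intro t
    have h1 : D t t = Y (e (Sum.inr t)) (e (Sum.inr t)) := rfl
    rw [h1]
    refine hchain _ ?_
    rw [heR]
    omega
  have hDpos : ∀ t : Fin L, 0 < D t t := fun t => diag_pos hY (e (Sum.inr t))
  have hprodsplit : ∏ i, Y i i = (∏ i : Fin K, A i i) * ∏ t : Fin L, D t t := by
    rw [← Equiv.prod_comp e fun j => Y j j, Fintype.prod_sum_type]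
    rfl
  have hprodA : ∏ i : Fin K, A i i ≤ c * A.det := hcA A hApos hAred
  have hprodD : ∏ t : Fin L, D t t ≤ (T ^ n * Y kK kK) ^ L :=
    (Finset.prod_le_prod (fun t _ => (hDpos t).le) fun t _ => hDbound t).trans_eq
      (by simp [Finset.prod_const, Finset.card_univ])
  have hYL : Y kK kK ^ L ≤ 2 ^ L * κ⁻¹ * S.det := by
    have h1 : κ * (Y kK kK ^ L / 2 ^ L) ≤ S.det := by
      have heq : ((1/2) * Y kK kK) ^ L = Y kK kK ^ L / 2 ^ L := by
        rw [div_eq_mul_inv, mul_comm, mul_pow]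
        congr 1
        rw [← inv_pow]
        norm_num
      rwa [heq] at hSdet
    have h2L : (0:ℝ) < 2 ^ L := by positivity
    calc Y kK kK ^ L = 2 ^ L * κ⁻¹ * (κ * (Y kK kK ^ L / 2 ^ L)) := by
          field_simp
    _ ≤ 2 ^ L * κ⁻¹ * S.det := by
          refine mul_le_mul_of_nonneg_left h1 ?_
          positivity
  calc ∏ i, Y i i = (∏ i : Fin K, A i i) * ∏ t : Fin L, D t t := hprodsplit
  _ ≤ (c * A.det) * ((T ^ n * Y kK kK) ^ L) := by
      refine mul_le_mul hprodA hprodD (Finset.prod_pos fun t _ => hDpos t).le ?_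
      exact (mul_pos hc hApos.det_pos).le
  _ = c * A.det * (T ^ (n*L) * Y kK kK ^ L) := by rw [mul_pow, ← pow_mul]
  _ ≤ c * A.det * (T ^ (n*n) * Y kK kK ^ L) := by
      have hTex : T ^ (n*L) ≤ T ^ (n*n) :=
        pow_le_pow_right₀ hT1 (Nat.mul_le_mul_left n hLn)
      have h0 : (0:ℝ) ≤ c * A.det := (mul_pos hc hApos.det_pos).le
      have h1 : (0:ℝ) ≤ Y kK kK ^ L := by positivity
      refine mul_le_mul_of_nonneg_left ?_ h0
      exact mul_le_mul_of_nonneg_right hTex h1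
  _ ≤ c * A.det * (T ^ (n*n) * (2 ^ L * κ⁻¹ * S.det)) := by
      have h0 : (0:ℝ) ≤ c * A.det := (mul_pos hc hApos.det_pos).le
      have h1 : (0:ℝ) ≤ T ^ (n*n) := by positivity
      refine mul_le_mul_of_nonneg_left ?_ h0
      exact mul_le_mul_of_nonneg_left hYL h1
  _ ≤ c * A.det * (T ^ (n*n) * (2 ^ n * κ⁻¹ * S.det)) := by
      have h0 : (0:ℝ) ≤ c * A.det := (mul_pos hc hApos.det_pos).le
      have h1 : (0:ℝ) ≤ T ^ (n*n) := by positivity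
      have h2 : (2:ℝ) ^ L ≤ 2 ^ n := pow_le_pow_right₀ (by norm_num) hLn
      refine mul_le_mul_of_nonneg_left ?_ h0
      refine mul_le_mul_of_nonneg_left ?_ h1
      have h3 : (0:ℝ) < κ⁻¹ * S.det := mul_pos (by positivity) hSpos.det_pos
      calc (2:ℝ) ^ L * κ⁻¹ * S.det = 2 ^ L * (κ⁻¹ * S.det) := by ring
      _ ≤ 2 ^ n * (κ⁻¹ * S.det) := mul_le_mul_of_nonneg_right h2 h3.le
      _ = 2 ^ n * κ⁻¹ * S.det := by ring
  _ = c * T ^ (n*n) * 2 ^ n * κ⁻¹ * (A.det * S.det) := by ring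
  _ = c * T ^ (n*n) * 2 ^ n * κ⁻¹ * Y.det := by rw [← hdetY]

end GapStep

section MainProd

lemma chain_bound {n : ℕ} {Y : Matrix (Fin n) (Fin n) ℝ} (hY : Y.PosDef)
    {T : ℝ} (hT1 : 1 ≤ T) {s : ℕ} (hs : s < n)
    (hstep : ∀ m : ℕ, s ≤ m → ∀ h1 : m + 1 < n,
      Y ⟨m + 1, h1⟩ ⟨m + 1, h1⟩ ≤ T * Y ⟨m, Nat.lt_of_succ_lt h1⟩ ⟨m, Nat.lt_of_succ_lt h1⟩) :
    ∀ j : Fin n, s ≤ (j : ℕ) → Y j j ≤ T ^ n * Y ⟨s, hs⟩ ⟨s, hs⟩ := by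
  have hT0 : (0:ℝ) < T := lt_of_lt_of_le one_pos hT1
  have key : ∀ d : ℕ, ∀ hj : s + d < n,
      Y ⟨s + d, hj⟩ ⟨s + d, hj⟩ ≤ T ^ d * Y ⟨s, hs⟩ ⟨s, hs⟩ := by
    intro d
    induction d with
    | zero =>
      intro hj
      simp
    | succ d ih =>
      intro hj
      have hd : s + d < n := by omega
      have h1 := hstep (s + d) (by omega) (by omega)
      have h2 := ih hd
      have h3 : 0 < Y ⟨s + d, hd⟩ ⟨s + d, hd⟩ := diag_pos hY _
      calc Y ⟨s + (d + 1), hj⟩ ⟨s + (d + 1), hj⟩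
          ≤ T * Y ⟨s + d, hd⟩ ⟨s + d, hd⟩ := h1
      _ ≤ T * (T ^ d * Y ⟨s, hs⟩ ⟨s, hs⟩) := mul_le_mul_of_nonneg_left h2 hT0.le
      _ = T ^ (d + 1) * Y ⟨s, hs⟩ ⟨s, hs⟩ := by ring
  intro j hj
  have h1 := key ((j : ℕ) - s) (by omega)
  have hjeq : (⟨s + ((j : ℕ) - s), by omega⟩ : Fin n) = j := by
    apply Fin.ext
    simp
    omega
  rw [hjeq] at h1
  have h2 : T ^ ((j : ℕ) - s) ≤ T ^ n := pow_le_pow_right₀ hT1 (by omega)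
  have h3 : 0 < Y ⟨s, hs⟩ ⟨s, hs⟩ := diag_pos hY _
  calc Y j j ≤ T ^ ((j : ℕ) - s) * Y ⟨s, hs⟩ ⟨s, hs⟩ := h1
  _ ≤ T ^ n * Y ⟨s, hs⟩ ⟨s, hs⟩ := mul_le_mul_of_nonneg_right h2 h3.le

/-- Minkowski's theorem on reduced forms : the product of the diagonal is comparable
to the determinant. -/
theorem prod_diag_le (n : ℕ) :
    ∃ c : ℝ, 0 < c ∧ ∀ Y : Matrix (Fin n) (Fin n) ℝ, Y.PosDef → Reduced Y →
      ∏ i, Y i i ≤ c * Y.det := by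
  induction n using Nat.strong_induction_on with
  | _ n IH =>
  rcases Nat.eq_zero_or_pos n with rfl | hn
  · exact ⟨1, one_pos, fun Y hY _ => by simp [Matrix.det_fin_zero]⟩
  choose cf hcf0 hcf using fun K : Fin n => IH (K : ℕ) K.isLt
  choose κf hκ0 hκf using fun m : ℕ => hermite m
  set T : ℝ := (n : ℝ) ^ 2 + 1 with hTdef
  have hT1 : 1 ≤ T := by
    have : (0:ℝ) ≤ (n:ℝ)^2 := by positivity
    rw [hTdef]; linarith
  have hT2 : (n : ℝ) ^ 2 ≤ T := by rw [hTdef]; linarith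
  set cbig : ℝ := (T ^ n) ^ n * (κf n)⁻¹
      + (∑ K : Fin n, cf K * T ^ (n * n) * 2 ^ n * (κf (n - (K : ℕ)))⁻¹) + 1 with hcbig
  have hterm_nonneg : ∀ K : Fin n,
      0 ≤ cf K * T ^ (n * n) * 2 ^ n * (κf (n - (K : ℕ)))⁻¹ := by
    intro K
    have h1 := hcf0 K
    have h2 := hκ0 (n - (K : ℕ))
    positivity
  have hsum_nonneg : 0 ≤ ∑ K : Fin n, cf K * T ^ (n * n) * 2 ^ n * (κf (n - (K : ℕ)))⁻¹ :=
    Finset.sum_nonneg fun K _ => hterm_nonneg K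
  have hfirst_nonneg : 0 ≤ (T ^ n) ^ n * (κf n)⁻¹ := by
    have := hκ0 n
    positivity
  have hcbig0 : 0 < cbig := by rw [hcbig]; linarith
  refine ⟨cbig, hcbig0, ?_⟩
  intro Y hY hR
  have hdetpos := hY.det_pos
  classical
  set P : ℕ → Prop := fun k => ∃ h : k + 1 < n,
    T * Y ⟨k, Nat.lt_of_succ_lt h⟩ ⟨k, Nat.lt_of_succ_lt h⟩ < Y ⟨k + 1, h⟩ ⟨k + 1, h⟩ with hP
  by_cases hgap : ∃ k, P k
  · -- gap case
    obtain ⟨k0, hk0⟩ := hgap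
    have hk0n : k0 ≤ n := by
      rcases hk0 with ⟨h, _⟩
      omega
    set ks := Nat.findGreatest P n with hks
    have hPks : P ks := Nat.findGreatest_spec hk0n hk0
    have hnogap : ∀ m, ks < m → m ≤ n → ¬ P m := fun m h1 h2 =>
      Nat.findGreatest_is_greatest h1 h2
    obtain ⟨hKn, hgapK⟩ := hPks
    have hstep : ∀ m : ℕ, ks + 1 ≤ m → ∀ h1 : m + 1 < n,
        Y ⟨m + 1, h1⟩ ⟨m + 1, h1⟩ ≤ T * Y ⟨m, Nat.lt_of_succ_lt h1⟩ ⟨m, Nat.lt_of_succ_lt h1⟩ := by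
      intro m hm h1
      by_contra hcon
      push_neg at hcon
      exact hnogap m (by omega) (by omega) ⟨h1, hcon⟩
    have hch := chain_bound hY hT1 hKn hstep
    set Kf : Fin n := ⟨ks + 1, hKn⟩ with hKf
    have hmain := gap_step (K := ks + 1) (Nat.succ_pos ks) hKn hY hR
      (hcf0 Kf) (hcf Kf) (hκ0 (n - (ks + 1))) (hκf (n - (ks + 1))) hT1 hT2 hgapK hch
    have hcoef : cf Kf * T ^ (n * n) * 2 ^ n * (κf (n - (ks + 1)))⁻¹ ≤ cbig := by
      have h1 : cf Kf * T ^ (n * n) * 2 ^ n * (κf (n - (ks + 1)))⁻¹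
          ≤ ∑ K : Fin n, cf K * T ^ (n * n) * 2 ^ n * (κf (n - (K : ℕ)))⁻¹ :=
        Finset.single_le_sum (fun K _ => hterm_nonneg K) (Finset.mem_univ Kf)
      rw [hcbig]
      linarith
    calc ∏ i, Y i i
        ≤ cf Kf * T ^ (n * n) * 2 ^ n * (κf (n - (ks + 1)))⁻¹ * Y.det := hmain
    _ ≤ cbig * Y.det := mul_le_mul_of_nonneg_right hcoef hdetpos.le
  · -- no gap case
    push_neg at hgap
    have hstep : ∀ m : ℕ, 0 ≤ m → ∀ h1 : m + 1 < n,
        Y ⟨m + 1, h1⟩ ⟨m + 1, h1⟩ ≤ T * Y ⟨m, Nat.lt_of_succ_lt h1⟩ ⟨m, Nat.lt_of_succ_lt h1⟩ := by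
      intro m _ h1
      by_contra hcon
      push_neg at hcon
      exact hgap m ⟨h1, hcon⟩
    have hch := chain_bound hY hT1 hn hstep
    have h00 : 0 < Y ⟨0, hn⟩ ⟨0, hn⟩ := diag_pos hY _
    have hprod : ∏ i, Y i i ≤ (T ^ n * Y ⟨0, hn⟩ ⟨0, hn⟩) ^ n := by
      calc ∏ i, Y i i ≤ ∏ _i : Fin n, (T ^ n * Y ⟨0, hn⟩ ⟨0, hn⟩) :=
            Finset.prod_le_prod (fun i _ => (diag_pos hY i).le)
              (fun i _ => hch i (Nat.zero_le _))
      _ = (T ^ n * Y ⟨0, hn⟩ ⟨0, hn⟩) ^ n := by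
          simp [Finset.prod_const, Finset.card_univ]
    have hherm := hκf n Y hY (Y ⟨0, hn⟩ ⟨0, hn⟩) h00 fun a ha => min_at_zero hY hR hn ha
    -- κf n * Y00 ^ n ≤ det Y
    have hYn : Y ⟨0, hn⟩ ⟨0, hn⟩ ^ n ≤ (κf n)⁻¹ * Y.det := by
      have hκn := hκ0 n
      have h := mul_le_mul_of_nonneg_left hherm (le_of_lt (inv_pos.mpr hκn))
      rwa [← mul_assoc, inv_mul_cancel₀ hκn.ne', one_mul] at h
    have hTnn : (0:ℝ) < (T ^ n) ^ n := by positivity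
    calc ∏ i, Y i i ≤ (T ^ n * Y ⟨0, hn⟩ ⟨0, hn⟩) ^ n := hprod
    _ = (T ^ n) ^ n * Y ⟨0, hn⟩ ⟨0, hn⟩ ^ n := by rw [mul_pow]
    _ ≤ (T ^ n) ^ n * ((κf n)⁻¹ * Y.det) := mul_le_mul_of_nonneg_left hYn hTnn.le
    _ = (T ^ n) ^ n * (κf n)⁻¹ * Y.det := by ring
    _ ≤ cbig * Y.det := by
        refine mul_le_mul_of_nonneg_right ?_ hdetpos.le
        rw [hcbig]
        linarith

end MainProd

section Eps

lemma det_abs_le {m : ℕ} (M : Matrix (Fin m) (Fin m) ℝ) {b : ℝ} (hb : 0 ≤ b)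
    (hM : ∀ i j, |M i j| ≤ b) : |M.det| ≤ (m.factorial : ℝ) * b ^ m := by
  rw [Matrix.det_apply]
  calc |∑ σ : Equiv.Perm (Fin m), Equiv.Perm.sign σ • ∏ i, M (σ i) i|
      ≤ ∑ σ : Equiv.Perm (Fin m), |Equiv.Perm.sign σ • ∏ i, M (σ i) i| :=
        Finset.abs_sum_le_sum_abs _ _
  _ ≤ ∑ _σ : Equiv.Perm (Fin m), b ^ m := by
      refine Finset.sum_le_sum fun σ _ => ?_
      have h1 : |Equiv.Perm.sign σ • ∏ i, M (σ i) i| = |∏ i, M (σ i) i| := by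
        rcases Int.units_eq_one_or (Equiv.Perm.sign σ) with h | h <;>
          simp [h, Units.smul_def, abs_neg]
      rw [h1, Finset.abs_prod]
      calc ∏ i, |M (σ i) i| ≤ ∏ _i : Fin m, b :=
            Finset.prod_le_prod (fun _ _ => abs_nonneg _) fun i _ => hM _ _
      _ = b ^ m := by simp [Finset.prod_const, Finset.card_univ]
  _ = (m.factorial : ℝ) * b ^ m := by
      simp [Finset.sum_const, Finset.card_univ, Fintype.card_perm, nsmul_eq_mul]

lemma entry_inv_bound {m : ℕ} {M : Matrix (Fin m) (Fin m) ℝ} {b δ : ℝ} (hb : 1 ≤ b)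
    (hM : ∀ i j, |M i j| ≤ b) (hδ : 0 < δ) (hdet : δ ≤ M.det) (i j : Fin m) :
    |M⁻¹ i j| ≤ δ⁻¹ * ((m.factorial : ℝ) * b ^ m) := by
  have hb0 : (0:ℝ) ≤ b := by linarith
  have hdetpos : 0 < M.det := lt_of_lt_of_le hδ hdet
  rw [Matrix.inv_def, Ring.inverse_eq_inv', Matrix.smul_apply, smul_eq_mul, abs_mul]
  have h1 : |M.det⁻¹| ≤ δ⁻¹ := by
    rw [abs_inv, abs_of_pos hdetpos]
    exact inv_anti₀ hδ hdet
  have h2 : |M.adjugate i j| ≤ (m.factorial : ℝ) * b ^ m := by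
    rw [Matrix.adjugate_apply]
    refine det_abs_le _ hb0 ?_
    intro p q
    rcases eq_or_ne p j with rfl | hpj
    · rw [Matrix.updateRow_self]
      rcases eq_or_ne q i with rfl | hqi
      · simpa using hb
      · rw [Pi.single_eq_of_ne hqi]
        simpa using hb0
    · rw [Matrix.updateRow_ne hpj]
      exact hM p q
  refine mul_le_mul h1 h2 (abs_nonneg _) ?_
  positivity

lemma mulVec_dot_symm {N : Matrix ι ι ℝ} (hN : Nᵀ = N) (a b : ι → ℝ) :
    (N *ᵥ a) ⬝ᵥ b = a ⬝ᵥ (N *ᵥ b) := by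
  have h2 : b ᵥ* N = N *ᵥ b := by conv_lhs => rw [← hN, Matrix.vecMul_transpose]
  rw [dotProduct_comm, Matrix.dotProduct_mulVec, h2, dotProduct_comm]

lemma qf_lower {m : ℕ} {M : Matrix (Fin m) (Fin m) ℝ} (hM : M.PosDef) {β : ℝ} (hβ : 0 < β)
    (hMinv : ∀ i j, |M⁻¹ i j| ≤ β) (x : Fin m → ℝ) :
    ((m : ℝ) ^ 2 * β)⁻¹ * ∑ i, x i ^ 2 ≤ qf M x := by
  rcases eq_or_ne x 0 with rfl | hx
  · simp [qf]
  have hm0 : 0 < m := by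
    rcases Nat.eq_zero_or_pos m with h0 | h
    · exfalso
      apply hx
      funext i
      rw [h0] at i
      exact i.elim0
    · exact h
  have hQ : 0 < ∑ i, x i ^ 2 := by
    obtain ⟨i, hi⟩ := Function.ne_iff.mp hx
    refine Finset.sum_pos' (fun j _ => sq_nonneg _) ⟨i, Finset.mem_univ i, ?_⟩
    have h1 : 0 < |x i| := abs_pos.mpr hi
    nlinarith [sq_abs (x i)]
  -- square root of M
  set S := CFC.sqrt M with hSdef
  have hSps : S.PosSemidef := (CFC.sqrt_nonneg M).posSemidef
  have hSsym : Sᵀ = S := by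
    have h := hSps.1
    rwa [Matrix.IsHermitian, Matrix.conjTranspose_eq_transpose_of_trivial] at h
  have hSS : S * S = M := CFC.sqrt_mul_sqrt_self M hM.posSemidef.nonneg
  have hdetsq : S.det * S.det = M.det := by rw [← Matrix.det_mul, hSS]
  have hdetS : S.det ≠ 0 := by
    intro h
    have := hM.det_pos
    rw [← hdetsq, h] at this
    simp at this
  have hUnit : IsUnit S.det := isUnit_iff_ne_zero.mpr hdetS
  have hSinvT : (S⁻¹)ᵀ = S⁻¹ := by rw [Matrix.transpose_nonsing_inv, hSsym]
  have hMinveq : M⁻¹ = S⁻¹ * S⁻¹ := by rw [← hSS, Matrix.mul_inv_rev]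
  have hqfM : qf M x = ∑ i, (S *ᵥ x) i ^ 2 := by rw [← hSS, qf_mul_self hSsym]
  have hqfMinv : qf M⁻¹ x = ∑ i, (S⁻¹ *ᵥ x) i ^ 2 := by
    rw [hMinveq, qf_mul_self hSinvT]
  -- inner product identity
  have hinner : ∑ i, (S *ᵥ x) i * (S⁻¹ *ᵥ x) i = ∑ i, x i ^ 2 := by
    have h1 : (S *ᵥ x) ⬝ᵥ (S⁻¹ *ᵥ x) = x ⬝ᵥ x := by
      rw [mulVec_dot_symm hSsym, Matrix.mulVec_mulVec, Matrix.mul_nonsing_inv S hUnit,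
        Matrix.one_mulVec]
    have h2 : x ⬝ᵥ x = ∑ i, x i ^ 2 := by simp [dotProduct, sq]
    rw [← h2]
    exact h1
  have hCS : (∑ i, x i ^ 2) ^ 2 ≤ qf M x * qf M⁻¹ x := by
    rw [hqfM, hqfMinv, ← hinner]
    exact Finset.sum_mul_sq_le_sq_mul_sq Finset.univ _ _
  -- bound qf M⁻¹ x
  have habs : ∀ i : Fin m, |x i| ≤ Real.sqrt (∑ j, x j ^ 2) := by
    intro i
    rw [← Real.sqrt_sq_eq_abs]
    refine Real.sqrt_le_sqrt ?_
    exact Finset.single_le_sum (f := fun j => x j ^ 2) (fun j _ => sq_nonneg _)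
      (Finset.mem_univ i)
  have hqinv : qf M⁻¹ x ≤ β * ((m : ℝ) ^ 2 * ∑ i, x i ^ 2) := by
    have h1 : qf M⁻¹ x = ∑ i, ∑ j, x i * (M⁻¹ i j * x j) := by
      simp [qf, dotProduct, Matrix.mulVec, Finset.mul_sum]
    rw [h1]
    have hsqrt : (0:ℝ) ≤ Real.sqrt (∑ j, x j ^ 2) := Real.sqrt_nonneg _
    have h2 : ∀ i j : Fin m, x i * (M⁻¹ i j * x j)
        ≤ β * (Real.sqrt (∑ j, x j ^ 2) * Real.sqrt (∑ j, x j ^ 2)) := by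
      intro i j
      calc x i * (M⁻¹ i j * x j) ≤ |x i * (M⁻¹ i j * x j)| := le_abs_self _
      _ = |M⁻¹ i j| * (|x i| * |x j|) := by rw [abs_mul, abs_mul]; ring
      _ ≤ β * (Real.sqrt (∑ j, x j ^ 2) * Real.sqrt (∑ j, x j ^ 2)) := by
          refine mul_le_mul (hMinv i j) ?_ (by positivity) hβ.le
          exact mul_le_mul (habs i) (habs j) (abs_nonneg _) hsqrt
    calc ∑ i, ∑ j, x i * (M⁻¹ i j * x j)
        ≤ ∑ _i : Fin m, ∑ _j : Fin m, β * (Real.sqrt (∑ j, x j ^ 2) * Real.sqrt (∑ j, x j ^ 2)) :=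
          Finset.sum_le_sum fun i _ => Finset.sum_le_sum fun j _ => h2 i j
    _ = β * ((m:ℝ)^2 * ∑ j, x j ^ 2) := by
        rw [Real.mul_self_sqrt (by positivity)]
        simp [Finset.sum_const, Finset.card_univ, nsmul_eq_mul]
        ring
  have hmpos : (0:ℝ) < (m:ℝ) ^ 2 * β := by
    have : (0:ℝ) < (m:ℝ) := by exact_mod_cast hm0
    positivity
  rw [inv_mul_le_iff₀ hmpos]
  have h3 : qf M x * qf M⁻¹ x ≤ qf M x * (β * ((m:ℝ)^2 * ∑ i, x i ^ 2)) :=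
    mul_le_mul_of_nonneg_left hqinv (qf_nonneg hM.posSemidef x)
  nlinarith [hCS, h3, hQ]

end Eps

end

end HMC

open HMC in
theorem hermite_mahler_compactness (n : ℕ)
    (M : Set {Y : Matrix (Fin n) (Fin n) ℝ // Y.PosDef})
    -- every element of `M` lies in Minkowski's fundamental domain:
    (hMink₁ : ∀ Y ∈ M, ∀ k : Fin n, ∀ h : (k : ℕ) + 1 < n, 0 ≤ Y.val k ⟨k + 1, h⟩)
    (hMink₂ : ∀ Y ∈ M, ∀ k : Fin n, ∀ a : Fin n → ℤ,
      (Finset.univ.filter (fun j : Fin n => k ≤ j)).gcd (fun j => (a j).natAbs) = 1 →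
      Y.val k k ≤ (fun i => (a i : ℝ)) ⬝ᵥ Y.val *ᵥ (fun i => (a i : ℝ)))
    (C₀ C₁ : ℝ) (hC₀ : 0 < C₀) (hC₁ : 0 < C₁)
    -- first minimum bounded below:
    (hm : ∀ Y ∈ M, ∀ a : Fin n → ℤ, a ≠ 0 →
      C₀ ≤ (fun i => (a i : ℝ)) ⬝ᵥ Y.val *ᵥ (fun i => (a i : ℝ)))
    -- determinant bounded above:
    (hdet : ∀ Y ∈ M, Y.val.det ≤ C₁) :
    IsCompact (closure M) := by
  classical
  rcases Nat.eq_zero_or_pos n with rfl | hn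
  · haveI : Subsingleton (Matrix (Fin 0) (Fin 0) ℝ) :=
      ⟨fun a b => by ext i j; exact i.elim0⟩
    haveI : Subsingleton {Y : Matrix (Fin 0) (Fin 0) ℝ // Y.PosDef} :=
      ⟨fun a b => Subtype.ext (Subsingleton.elim _ _)⟩
    exact (Set.toFinite _).isCompact
  obtain ⟨c, hc0, hc⟩ := HMC.prod_diag_le n
  obtain ⟨κ, hκ0, hκ⟩ := HMC.hermite n
  set δ : ℝ := κ * C₀ ^ n with hδdef
  have hδ0 : 0 < δ := mul_pos hκ0 (pow_pos hC₀ n)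
  set B₀ : ℝ := c * C₁ / C₀ ^ (n - 1) with hB
  have hB₀0 : 0 < B₀ := by
    rw [hB]
    positivity
  -- basic consequences for elements of M
  have hRed : ∀ Y ∈ M, Reduced Y.val := fun Y hYM k a hk => hMink₂ Y hYM k a hk
  have hmQ : ∀ Y ∈ M, ∀ a : Fin n → ℤ, a ≠ 0 → C₀ ≤ qf Y.val (ci a) :=
    fun Y hYM a ha => hm Y hYM a ha
  have hdiag_lb : ∀ Y ∈ M, ∀ i, C₀ ≤ Y.val i i := by
    intro Y hYM i
    have h1 : (Pi.single i 1 : Fin n → ℤ) ≠ 0 := by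
      intro h
      have := congrFun h i
      simp at this
    have h3 : C₀ ≤ qf Y.val (ci (Pi.single i 1)) := hmQ Y hYM _ h1
    rwa [ci_single, Int.cast_one, qf_single] at h3
  have hdet_lb : ∀ Y ∈ M, δ ≤ Y.val.det := fun Y hYM =>
    hκ Y.val Y.2 C₀ hC₀ (hmQ Y hYM)
  have hdiag_ub : ∀ Y ∈ M, ∀ i, Y.val i i ≤ B₀ := by
    intro Y hYM i
    have hprod := hc Y.val Y.2 (hRed Y hYM)
    have hdetY := hdet Y hYM
    have h1 : Y.val i i * C₀ ^ (n - 1) ≤ ∏ j, Y.val j j := by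
      rw [← Finset.mul_prod_erase Finset.univ _ (Finset.mem_univ i)]
      refine mul_le_mul_of_nonneg_left ?_ (diag_pos Y.2 i).le
      calc C₀ ^ (n - 1) = ∏ _j ∈ Finset.univ.erase i, C₀ := by
            rw [Finset.prod_const, Finset.card_erase_of_mem (Finset.mem_univ i)]
            simp [Finset.card_univ]
      _ ≤ ∏ j ∈ Finset.univ.erase i, Y.val j j :=
            Finset.prod_le_prod (fun _ _ => hC₀.le) fun j _ => hdiag_lb Y hYM j
    have h2 : Y.val i i * C₀ ^ (n - 1) ≤ c * C₁ :=
      le_trans h1 (le_trans hprod (mul_le_mul_of_nonneg_left hdetY hc0.le))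
    rw [hB, le_div_iff₀ (by positivity)]
    exact h2
  have hsymmM : ∀ Y ∈ M, ∀ i j : Fin n, Y.val i j = Y.val j i :=
    fun Y _ i j => symm_apply Y.2.1 j i
  have hentry : ∀ Y ∈ M, ∀ i j, |Y.val i j| ≤ B₀ := by
    intro Y hYM i j
    have hub := hdiag_ub Y hYM
    rcases lt_trichotomy i j with h | rfl | h
    · have h1 := offdiag_bound Y.2 (hRed Y hYM) h
      rw [abs_mul] at h1
      have h2 : |(2:ℝ)| = 2 := by norm_num
      rw [h2] at h1
      have h3 := hub i
      have h4 := abs_nonneg (Y.val i j)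
      linarith
    · rw [abs_of_pos (diag_pos Y.2 i)]
      exact hub i
    · rw [hsymmM Y hYM i j]
      have h1 := offdiag_bound Y.2 (hRed Y hYM) h
      rw [abs_mul] at h1
      have h2 : |(2:ℝ)| = 2 := by norm_num
      rw [h2] at h1
      have h3 := hub j
      have h4 := abs_nonneg (Y.val j i)
      linarith
  -- uniform lower bound on the quadratic forms
  set b' : ℝ := max B₀ 1 with hb'
  have hb'1 : (1:ℝ) ≤ b' := le_max_right _ _
  have hb'0 : (0:ℝ) < b' := lt_of_lt_of_le one_pos hb'1
  set β : ℝ := δ⁻¹ * ((n.factorial : ℝ) * b' ^ n) with hβ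
  have hfact : (0:ℝ) < (n.factorial : ℝ) := by exact_mod_cast n.factorial_pos
  have hβ0 : 0 < β := mul_pos (inv_pos.mpr hδ0) (mul_pos hfact (pow_pos hb'0 n))
  set ε : ℝ := ((n:ℝ) ^ 2 * β)⁻¹ with hε
  have hn0 : (0:ℝ) < (n:ℝ) := by exact_mod_cast hn
  have hε0 : 0 < ε := by
    rw [hε]
    positivity
  have hqf_lb : ∀ Y ∈ M, ∀ x : Fin n → ℝ, ε * ∑ i, x i ^ 2 ≤ qf Y.val x := by
    intro Y hYM x
    refine qf_lower Y.2 hβ0 ?_ x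
    intro i j
    refine entry_inv_bound hb'1 ?_ hδ0 (hdet_lb Y hYM) i j
    intro p q
    exact le_trans (hentry Y hYM p q) (le_max_left _ _)
  -- topology
  set Mset : Set (Matrix (Fin n) (Fin n) ℝ) := Subtype.val '' M with hMset
  set Kc : Set (Matrix (Fin n) (Fin n) ℝ) := closure Mset with hKc
  set box : Set (Matrix (Fin n) (Fin n) ℝ) :=
    Set.pi Set.univ (fun _ : Fin n => Set.pi Set.univ fun _ : Fin n => Set.Icc (-B₀) B₀)
    with hbox
  have hMbox : Mset ⊆ box := by
    rintro Z ⟨Y, hYM, rfl⟩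
    rw [hbox]
    intro i _
    intro j _
    have := hentry Y hYM i j
    rw [abs_le] at this
    exact ⟨this.1, this.2⟩
  have hboxcompact : IsCompact box :=
    isCompact_univ_pi fun _ => isCompact_univ_pi fun _ => isCompact_Icc
  have hKcompact : IsCompact Kc :=
    hboxcompact.of_isClosed_subset isClosed_closure
      (closure_minimal hMbox hboxcompact.isClosed)
  -- limits are positive definite
  set good : Set (Matrix (Fin n) (Fin n) ℝ) :=
    {Z | (∀ i j, Z i j = Z j i) ∧ ∀ x : Fin n → ℝ, ε * ∑ i, x i ^ 2 ≤ qf Z x} with hgood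
  have hqf_cont : ∀ x : Fin n → ℝ, Continuous fun Z : Matrix (Fin n) (Fin n) ℝ => qf Z x := by
    intro x
    show Continuous fun Z : Matrix (Fin n) (Fin n) ℝ => ∑ i, x i * ∑ j, Z i j * x j
    refine continuous_finset_sum _ fun i _ => Continuous.mul continuous_const ?_
    refine continuous_finset_sum _ fun j _ => Continuous.mul ?_ continuous_const
    exact (continuous_apply j).comp (continuous_apply i)
  have hgoodclosed : IsClosed good := by
    have h1 : good = (⋂ i, ⋂ j, {Z : Matrix (Fin n) (Fin n) ℝ | Z i j = Z j i}) ∩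
        ⋂ x : Fin n → ℝ, {Z | ε * ∑ i, x i ^ 2 ≤ qf Z x} := by
      rw [hgood]
      ext Z
      simp [Set.mem_iInter, Set.mem_setOf_eq]
    rw [h1]
    refine IsClosed.inter ?_ ?_
    · refine isClosed_iInter fun i => isClosed_iInter fun j => ?_
      exact isClosed_eq ((continuous_apply j).comp (continuous_apply i))
        ((continuous_apply i).comp (continuous_apply j))
    · exact isClosed_iInter fun x => isClosed_le continuous_const (hqf_cont x)
  have hMgood : Mset ⊆ good := by
    rintro Z ⟨Y, hYM, rfl⟩
    exact ⟨hsymmM Y hYM, hqf_lb Y hYM⟩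
  have hKc_good : Kc ⊆ {Z : Matrix (Fin n) (Fin n) ℝ | Z.PosDef} := by
    intro Z hZ
    have hZ2 : Z ∈ good := closure_minimal hMgood hgoodclosed hZ
    rw [hgood] at hZ2
    obtain ⟨hsym, hlb⟩ := hZ2
    refine Matrix.PosDef.of_dotProduct_mulVec_pos ?_ ?_
    · ext i j
      show star (Z j i) = Z i j
      rw [star_trivial]
      exact hsym j i
    · intro x hx
      have hst : star x = x := funext fun i => star_trivial _
      rw [hst]
      show 0 < qf Z x
      have h1 := hlb x
      have h2 : 0 < ∑ i, x i ^ 2 := by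
        obtain ⟨i, hi⟩ := Function.ne_iff.mp hx
        refine Finset.sum_pos' (fun j _ => sq_nonneg _) ⟨i, Finset.mem_univ i, ?_⟩
        have h3 : 0 < |x i| := abs_pos.mpr hi
        nlinarith [sq_abs (x i)]
      nlinarith [h1, hε0, h2, mul_pos hε0 h2]
  -- wrap up
  have hclosureM : closure M = Subtype.val ⁻¹' Kc :=
    Topology.IsEmbedding.subtypeVal.closure_eq_preimage_closure_image M
  rw [hclosureM, Topology.IsEmbedding.subtypeVal.isCompact_iff]
  have himg : (Subtype.val : {Y : Matrix (Fin n) (Fin n) ℝ // Y.PosDef} →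
      Matrix (Fin n) (Fin n) ℝ) '' (Subtype.val ⁻¹' Kc) = Kc := by
    apply Set.Subset.antisymm
    · rintro Z ⟨W, hW, rfl⟩
      exact hW
    · intro Z hZ
      exact ⟨⟨Z, hKc_good hZ⟩, hZ, rfl⟩
  rw [himg]
  exact hKcompact
end
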